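/- arXiv:1707.01852 — 7 statements merged into one kernel-verified Lean document; each statement's English description precedes it below -/
import Mathlib

section
/- For every integer d ≥ 1, every ζ ∈ 𝒮, every even integer M ≥ 2, every localization datum L in Λ(M), and all x,y ∈ Λ(M): ∑_{z∈Λ(M)} F_ζ(d^Λ_L(x,z))·F_ζ(d^Λ_L(z,y)) ≤ 2^{d+1}·‖F‖_Γ·F_ζ(d^Λ_L(x,y)). (Second inequality of Lemma B.2.) -/
open scoped BigOperators

/-- `F r = (1+r)^{-(d+1)}`. -/
noncomputable def Ffun (d : ℕ) (r : ℝ) : ℝ := ((1 + r) ^ (d + 1))⁻¹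

/-- ℓ¹ norm on `ℤ^d`, valued in `ℕ`. -/
def l1norm {d : ℕ} (y : Fin d → ℤ) : ℕ := ∑ j, (y j).natAbs

/-- `‖F‖_Γ := ∑_{y ∈ ℤ^d} F(‖y‖₁)`. -/
noncomputable def FnormGamma (d : ℕ) : ℝ := ∑' y : Fin d → ℤ, Ffun d (l1norm y)

/-- The quotient ℓ¹-metric on `ℤ/Mℤ`: `min_{k∈ℤ} |b + kM|` where `b` is any lift of `v - u`. -/
def torusD (M : ℕ) (u v : ZMod M) : ℕ := min (v - u).val (M - (v - u).val)

/-- The quotient ℓ¹-metric `d^Λ` on the discrete torus `Λ(M) = (ℤ/Mℤ)^d`. -/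
def dTorus {M d : ℕ} (x y : Fin d → ZMod M) : ℕ := ∑ j, torusD M (x j) (y j)

/-- `dist(x, L)` for a localization datum `L = (ℓ, l)`. -/
def distLoc {M d : ℕ} (ℓ : Fin d → Bool) (l : Fin d → ZMod M) (x : Fin d → ZMod M) : ℕ :=
  ∑ j, if ℓ j then torusD M (x j) (l j) else 0

/-- The weighted "metric" `d^Λ_L(x,y) = d^Λ(x,y) + dist(x,L) + dist(y,L)`. -/
def dTorusL {M d : ℕ} (ℓ : Fin d → Bool) (l : Fin d → ZMod M) (x y : Fin d → ZMod M) : ℕ :=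
  dTorus x y + distLoc ℓ l x + distLoc ℓ l y

/-- The set `𝒮` of weight functions: positive, bounded, non-increasing, log-superadditive
functions on `[0,∞)` decaying faster than any inverse power. -/
def InS (ζ : ℝ → ℝ) : Prop :=
  (∀ r : ℝ, 0 ≤ r → 0 < ζ r) ∧
  BddAbove (ζ '' Set.Ici (0 : ℝ)) ∧
  (∀ r s : ℝ, 0 ≤ r → r ≤ s → ζ s ≤ ζ r) ∧
  (∀ r s : ℝ, 0 ≤ r → 0 ≤ s → ζ r * ζ s ≤ ζ (r + s)) ∧
  (∀ n : ℕ, ∃ C : ℝ, ∀ r : ℝ, 0 ≤ r → r ^ n * ζ r ≤ C)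

/-- `F_ζ r = ζ(r)/(1+r)^{d+1}`. -/
noncomputable def Fzeta (d : ℕ) (ζ : ℝ → ℝ) (r : ℝ) : ℝ := ζ r * ((1 + r) ^ (d + 1))⁻¹

/-! ### Auxiliary lemmas -/

section Aux

/-- Minimal-representative "absolute value" on `ZMod M`. -/
def tval {M : ℕ} (b : ZMod M) : ℕ := min b.val (M - b.val)

lemma torusD_eq_tval {M : ℕ} (u v : ZMod M) : torusD M u v = tval (v - u) := rfl

/-- An explicit integer representative of minimal absolute value. -/
def repInt {M : ℕ} (b : ZMod M) : ℤ :=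
  if b.val ≤ M - b.val then (b.val : ℤ) else (b.val : ℤ) - (M : ℤ)

lemma repInt_cast {M : ℕ} [NeZero M] (b : ZMod M) : ((repInt b : ℤ) : ZMod M) = b := by
  unfold repInt
  split_ifs with h
  · push_cast
    exact ZMod.natCast_rightInverse b
  · push_cast
    simp [ZMod.natCast_self, ZMod.natCast_rightInverse b]

lemma natAbs_repInt {M : ℕ} [NeZero M] (b : ZMod M) : (repInt b).natAbs = tval b := by
  have hv : b.val < M := ZMod.val_lt b
  unfold repInt tval
  split_ifs with h <;> rw [Nat.min_def] <;> split_ifs <;> omega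

lemma tval_le_natAbs {M : ℕ} [NeZero M] (b : ZMod M) (k : ℤ) (hk : ((k : ℤ) : ZMod M) = b) :
    tval b ≤ k.natAbs := by
  have hv : b.val < M := ZMod.val_lt b
  have hdvd : (M : ℤ) ∣ (k - (b.val : ℤ)) := by
    rw [← ZMod.intCast_zmod_eq_zero_iff_dvd]
    push_cast
    rw [hk, ZMod.natCast_rightInverse b, sub_self]
  obtain ⟨q, hq⟩ := hdvd
  have hk' : k = (b.val : ℤ) + (M : ℤ) * q := by linarith [hq]
  rcases lt_trichotomy q 0 with h | h | h
  · have ht : (M : ℤ) * q ≤ (M : ℤ) * (-1) := by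
      apply mul_le_mul_of_nonneg_left (by omega) (by positivity)
    have : k ≤ (b.val : ℤ) - M := by linarith
    simp only [tval, min_le_iff]
    omega
  · subst h
    simp only [mul_zero, add_zero] at hk'
    simp only [tval, min_le_iff]
    omega
  · have ht : (M : ℤ) * 1 ≤ (M : ℤ) * q := by
      apply mul_le_mul_of_nonneg_left (by omega) (by positivity)
    have : (b.val : ℤ) + M ≤ k := by linarith
    simp only [tval, min_le_iff]
    omega

lemma tval_add_le {M : ℕ} [NeZero M] (b c : ZMod M) : tval (b + c) ≤ tval b + tval c := by
  have h : ((repInt b + repInt c : ℤ) : ZMod M) = b + c := by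
    push_cast [repInt_cast]; ring
  calc tval (b + c) ≤ (repInt b + repInt c).natAbs := tval_le_natAbs _ _ h
    _ ≤ (repInt b).natAbs + (repInt c).natAbs := Int.natAbs_add_le _ _
    _ = tval b + tval c := by rw [natAbs_repInt, natAbs_repInt]

lemma dTorus_triangle {M d : ℕ} [NeZero M] (x z y : Fin d → ZMod M) :
    dTorus x y ≤ dTorus x z + dTorus z y := by
  unfold dTorus
  rw [← Finset.sum_add_distrib]
  apply Finset.sum_le_sum
  intro j _
  rw [torusD_eq_tval, torusD_eq_tval, torusD_eq_tval]
  have : y j - x j = (z j - x j) + (y j - z j) := by ring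
  rw [this]
  exact tval_add_le _ _

lemma dTorusL_triangle {M d : ℕ} [NeZero M] (ℓ : Fin d → Bool) (l : Fin d → ZMod M)
    (x z y : Fin d → ZMod M) :
    dTorusL ℓ l x y ≤ dTorusL ℓ l x z + dTorusL ℓ l z y := by
  have := dTorus_triangle x z y
  unfold dTorusL
  omega

lemma Ffun_pos (d : ℕ) {r : ℝ} (hr : 0 ≤ r) : 0 < Ffun d r := by
  unfold Ffun; positivity

lemma Ffun_anti (d : ℕ) {r s : ℝ} (hr : 0 ≤ r) (hrs : r ≤ s) : Ffun d s ≤ Ffun d r := by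
  unfold Ffun
  apply inv_anti₀ (by positivity)
  apply pow_le_pow_left₀ (by linarith) (by linarith)

/-- Summability of `y ↦ F(‖y‖₁)` on `ℤ^d`. -/
lemma summable_Ffun_l1 (d : ℕ) (hd : 1 ≤ d) :
    Summable fun y : Fin d → ℤ => Ffun d (l1norm y) := by
  have hd0 : (0 : ℝ) < d := by exact_mod_cast hd
  set p : ℝ := (d + 1) / d with hp
  have hp1 : 1 < p := by
    rw [hp, lt_div_iff₀ hd0]; linarith
  have hp0 : 0 < p := by linarith
  -- one-dimensional summability
  have hnat : Summable fun n : ℕ => ((1 + (n : ℝ)) ^ p)⁻¹ := by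
    have h0 := Real.summable_one_div_nat_rpow.mpr hp1
    have h1 := h0.comp_injective Nat.succ_injective
    apply h1.congr
    intro n
    simp only [Function.comp_apply, Nat.succ_eq_add_one, one_div]
    push_cast
    rw [add_comm (n : ℝ) 1]
  have hg : Summable fun n : ℤ => ((1 + (n.natAbs : ℝ)) ^ p)⁻¹ := by
    apply Summable.of_nat_of_neg
    · exact hnat.congr fun n => by simp
    · exact hnat.congr fun n => by simp
  -- product summability over `Fin k → ℤ`
  have key : ∀ k : ℕ, Summable fun y : Fin k → ℤ => ∏ j, ((1 + ((y j).natAbs : ℝ)) ^ p)⁻¹ := by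
    intro k
    induction k with
    | zero => exact Summable.of_finite
    | succ k ih =>
      have hmul := hg.mul_of_nonneg ih (fun n => by positivity) (fun y => by positivity)
      have h2 := hmul.comp_injective (Fin.consEquiv fun _ : Fin (k + 1) => ℤ).symm.injective
      apply h2.congr
      intro y
      simp only [Function.comp_apply, Fin.consEquiv_symm_apply]
      rw [Fin.prod_univ_succ]
      rfl
  -- comparison
  apply Summable.of_nonneg_of_le (fun y => (Ffun_pos d (by positivity)).le) _ (key d)
  intro y
  set N : ℝ := (l1norm y : ℝ) with hN
  have hN0 : 0 ≤ N := by positivity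
  have hsum : N = ∑ j, ((y j).natAbs : ℝ) := by
    rw [hN]; unfold l1norm; push_cast; rfl
  have hfac : ∀ j, ((1 + ((y j).natAbs : ℝ)) ^ p) ≤ (1 + N) ^ p := by
    intro j
    apply Real.rpow_le_rpow (by positivity) _ hp0.le
    have : ((y j).natAbs : ℝ) ≤ N := by
      rw [hsum]
      exact Finset.single_le_sum (f := fun j => ((y j).natAbs : ℝ))
        (fun i _ => by positivity) (Finset.mem_univ j)
    linarith
  have hprod : (∏ j, ((1 + ((y j).natAbs : ℝ)) ^ p)) ≤ (1 + N) ^ (d + 1) := by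
    calc (∏ j, ((1 + ((y j).natAbs : ℝ)) ^ p)) ≤ ∏ _j : Fin d, (1 + N) ^ p :=
          Finset.prod_le_prod (fun j _ => by positivity) (fun j _ => hfac j)
      _ = ((1 + N) ^ p) ^ (d : ℕ) := by
          rw [Finset.prod_const, Finset.card_univ, Fintype.card_fin]
      _ = (1 + N) ^ (p * d) := by
          rw [← Real.rpow_natCast ((1 + N) ^ p) d, ← Real.rpow_mul (by positivity)]
      _ = (1 + N) ^ ((d : ℝ) + 1) := by
          congr 1
          rw [hp]
          field_simp
      _ = (1 + N) ^ (d + 1 : ℕ) := by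
          rw [← Real.rpow_natCast (1 + N) (d + 1)]
          push_cast
          ring_nf
  have hL : Ffun d N = ((1 + N) ^ (d + 1 : ℕ))⁻¹ := rfl
  rw [hL]
  calc ((1 + N) ^ (d + 1 : ℕ))⁻¹ ≤ (∏ j, ((1 + ((y j).natAbs : ℝ)) ^ p))⁻¹ := by
        apply inv_anti₀ (by positivity) hprod
    _ = ∏ j, ((1 + ((y j).natAbs : ℝ)) ^ p)⁻¹ := by
        rw [← Finset.prod_inv_distrib]

/-- Sum over the torus of `F(dᴧ(x,z))` is at most `‖F‖_Γ`. -/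
lemma sum_Ffun_dTorus_left (d : ℕ) (hd : 1 ≤ d) (M : ℕ) [NeZero M] (x : Fin d → ZMod M) :
    ∑ z : Fin d → ZMod M, Ffun d (dTorus x z) ≤ FnormGamma d := by
  classical
  set g : (Fin d → ZMod M) → (Fin d → ℤ) := fun z j => repInt (z j - x j) with hg
  have hginj : Function.Injective g := by
    intro z z' h
    funext j
    have : ((repInt (z j - x j) : ℤ) : ZMod M) = ((repInt (z' j - x j) : ℤ) : ZMod M) :=
      congrArg (fun t : ℤ => (t : ZMod M)) (congrFun h j)
    rw [repInt_cast, repInt_cast] at this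
    have := congrArg (· + x j) this
    simpa using this
  have hl1 : ∀ z, l1norm (g z) = dTorus x z := by
    intro z
    unfold l1norm dTorus
    apply Finset.sum_congr rfl
    intro j _
    rw [hg]
    simp only
    rw [natAbs_repInt, torusD_eq_tval]
  have heq : ∑ z : Fin d → ZMod M, Ffun d (dTorus x z)
      = ∑ w ∈ Finset.image g Finset.univ, Ffun d (l1norm w) := by
    rw [Finset.sum_image (fun a _ b _ h => hginj h)]
    apply Finset.sum_congr rfl
    intro z _
    rw [hl1]
  rw [heq]
  exact Summable.sum_le_tsum _ (fun w _ => (Ffun_pos d (by positivity)).le) (summable_Ffun_l1 d hd)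

/-- Sum over the torus of `F(dᴧ(z,y))` is at most `‖F‖_Γ`. -/
lemma sum_Ffun_dTorus_right (d : ℕ) (hd : 1 ≤ d) (M : ℕ) [NeZero M] (y : Fin d → ZMod M) :
    ∑ z : Fin d → ZMod M, Ffun d (dTorus z y) ≤ FnormGamma d := by
  classical
  set g : (Fin d → ZMod M) → (Fin d → ℤ) := fun z j => repInt (y j - z j) with hg
  have hginj : Function.Injective g := by
    intro z z' h
    funext j
    have : ((repInt (y j - z j) : ℤ) : ZMod M) = ((repInt (y j - z' j) : ℤ) : ZMod M) :=
      congrArg (fun t : ℤ => (t : ZMod M)) (congrFun h j)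
    rw [repInt_cast, repInt_cast] at this
    have h2 : z j = y j - (y j - z j) := by ring
    rw [h2, this]; ring
  have hl1 : ∀ z, l1norm (g z) = dTorus z y := by
    intro z
    unfold l1norm dTorus
    apply Finset.sum_congr rfl
    intro j _
    rw [hg]
    simp only
    rw [natAbs_repInt, torusD_eq_tval]
  have heq : ∑ z : Fin d → ZMod M, Ffun d (dTorus z y)
      = ∑ w ∈ Finset.image g Finset.univ, Ffun d (l1norm w) := by
    rw [Finset.sum_image (fun a _ b _ h => hginj h)]
    apply Finset.sum_congr rfl
    intro z _
    rw [hl1]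
  rw [heq]
  exact Summable.sum_le_tsum _ (fun w _ => (Ffun_pos d (by positivity)).le) (summable_Ffun_l1 d hd)

/-- Pointwise quasi-metric inequality for `F_ζ`. -/
lemma Fzeta_mul_le (d : ℕ) (ζ : ℝ → ℝ) (hζ : InS ζ) {a b c : ℝ}
    (ha : 0 ≤ a) (hb : 0 ≤ b) (hc : 0 ≤ c) (habc : c ≤ a + b) :
    Fzeta d ζ a * Fzeta d ζ b ≤ 2 ^ d * Fzeta d ζ c * (Ffun d a + Ffun d b) := by
  obtain ⟨hpos, -, hmono, hsup, -⟩ := hζ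
  set A : ℝ := (1 + a) ^ (d + 1) with hA
  set B : ℝ := (1 + b) ^ (d + 1) with hB
  set C : ℝ := (1 + c) ^ (d + 1) with hC
  have hApos : 0 < A := by rw [hA]; positivity
  have hBpos : 0 < B := by rw [hB]; positivity
  have hCpos : 0 < C := by rw [hC]; positivity
  have hzeta : ζ a * ζ b ≤ ζ c := by
    calc ζ a * ζ b ≤ ζ (a + b) := hsup a b ha hb
      _ ≤ ζ c := hmono c (a + b) hc habc
  have key : C ≤ 2 ^ d * (A + B) := by
    have h1 : (1 + c) ≤ (1 + a) + (1 + b) := by linarith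
    have h2 : C ≤ ((1 + a) + (1 + b)) ^ (d + 1) := by
      rw [hC]
      exact pow_le_pow_left₀ (by linarith) h1 (d + 1)
    have h3 : ((1 + a) + (1 + b)) ^ (d + 1) ≤ 2 ^ (d + 1 - 1) * (A + B) :=
      add_pow_le (by linarith) (by linarith) (d + 1)
    simpa using h2.trans h3
  have hF : A⁻¹ * B⁻¹ ≤ 2 ^ d * C⁻¹ * (A⁻¹ + B⁻¹) := by
    have step : A⁻¹ * B⁻¹ = C⁻¹ * (C * (A⁻¹ * B⁻¹)) := by
      field_simp
    rw [step]
    have h4 : C * (A⁻¹ * B⁻¹) ≤ (2 ^ d * (A + B)) * (A⁻¹ * B⁻¹) :=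
      mul_le_mul_of_nonneg_right key (by positivity)
    calc C⁻¹ * (C * (A⁻¹ * B⁻¹)) ≤ C⁻¹ * ((2 ^ d * (A + B)) * (A⁻¹ * B⁻¹)) :=
          mul_le_mul_of_nonneg_left h4 (by positivity)
      _ = 2 ^ d * C⁻¹ * (A⁻¹ + B⁻¹) := by
          field_simp
          ring
  have hFa : Ffun d a = A⁻¹ := rfl
  have hFb : Ffun d b = B⁻¹ := rfl
  have hFc : Ffun d c = C⁻¹ := rfl
  unfold Fzeta
  rw [← hA, ← hB, ← hC, hFa, hFb]
  have lhs_eq : ζ a * A⁻¹ * (ζ b * B⁻¹) = (ζ a * ζ b) * (A⁻¹ * B⁻¹) := by ring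
  rw [lhs_eq]
  have hζc : 0 < ζ c := hpos c hc
  calc (ζ a * ζ b) * (A⁻¹ * B⁻¹) ≤ ζ c * (A⁻¹ * B⁻¹) := by
        apply mul_le_mul_of_nonneg_right hzeta (by positivity)
    _ ≤ ζ c * (2 ^ d * C⁻¹ * (A⁻¹ + B⁻¹)) := by
        apply mul_le_mul_of_nonneg_left hF hζc.le
    _ = 2 ^ d * (ζ c * C⁻¹) * (A⁻¹ + B⁻¹) := by ring

end Aux

/-- second inequality of Lemma B.2. For every `ζ ∈ 𝒮`, localization datum
`L = (ℓ,l)` in `Λ(M)` and all `x, y ∈ Λ(M)`: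
`∑_{z∈Λ(M)} F_ζ(d^Λ_L(x,z))·F_ζ(d^Λ_L(z,y)) ≤ 2^{d+1}·‖F‖_Γ·F_ζ(d^Λ_L(x,y))`. -/
theorem statement4 (d : ℕ) (hd : 1 ≤ d) (ζ : ℝ → ℝ) (hζ : InS ζ)
    (M : ℕ) [NeZero M] (hM : Even M) (hM2 : 2 ≤ M)
    (ℓ : Fin d → Bool) (l : Fin d → ZMod M) (x y : Fin d → ZMod M) :
    ∑ z : Fin d → ZMod M, Fzeta d ζ (dTorusL ℓ l x z) * Fzeta d ζ (dTorusL ℓ l z y) ≤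
      2 ^ (d + 1) * FnormGamma d * Fzeta d ζ (dTorusL ℓ l x y) := by
  have hζpos := hζ.1
  set c : ℕ := dTorusL ℓ l x y with hc
  have hFzc : 0 ≤ Fzeta d ζ (c : ℝ) := by
    unfold Fzeta
    have : 0 < ζ (c : ℝ) := hζpos _ (by positivity)
    positivity
  have pointwise : ∀ z : Fin d → ZMod M,
      Fzeta d ζ (dTorusL ℓ l x z) * Fzeta d ζ (dTorusL ℓ l z y) ≤
        2 ^ d * Fzeta d ζ (c : ℝ) * (Ffun d (dTorus x z) + Ffun d (dTorus z y)) := by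
    intro z
    set a : ℕ := dTorusL ℓ l x z with hadef
    set b : ℕ := dTorusL ℓ l z y with hbdef
    have htri : c ≤ a + b := dTorusL_triangle ℓ l x z y
    have h1 : Fzeta d ζ (a : ℝ) * Fzeta d ζ (b : ℝ) ≤
        2 ^ d * Fzeta d ζ (c : ℝ) * (Ffun d (a : ℝ) + Ffun d (b : ℝ)) := by
      apply Fzeta_mul_le d ζ hζ (by positivity) (by positivity) (by positivity)
      exact_mod_cast htri
    refine h1.trans ?_
    have ha2 : Ffun d (a : ℝ) ≤ Ffun d (dTorus x z : ℝ) := by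
      apply Ffun_anti d (by positivity)
      have h : dTorus x z ≤ a := by rw [hadef]; unfold dTorusL; omega
      exact_mod_cast h
    have hb2 : Ffun d (b : ℝ) ≤ Ffun d (dTorus z y : ℝ) := by
      apply Ffun_anti d (by positivity)
      have h : dTorus z y ≤ b := by rw [hbdef]; unfold dTorusL; omega
      exact_mod_cast h
    exact mul_le_mul_of_nonneg_left (add_le_add ha2 hb2)
      (mul_nonneg (by positivity) hFzc)
  calc ∑ z : Fin d → ZMod M, Fzeta d ζ (dTorusL ℓ l x z) * Fzeta d ζ (dTorusL ℓ l z y)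
      ≤ ∑ z : Fin d → ZMod M,
          2 ^ d * Fzeta d ζ (c : ℝ) * (Ffun d (dTorus x z) + Ffun d (dTorus z y)) :=
        Finset.sum_le_sum (fun z _ => pointwise z)
    _ = 2 ^ d * Fzeta d ζ (c : ℝ) *
          ((∑ z : Fin d → ZMod M, Ffun d (dTorus x z)) +
            (∑ z : Fin d → ZMod M, Ffun d (dTorus z y))) := by
        rw [← Finset.mul_sum, Finset.sum_add_distrib]
    _ ≤ 2 ^ d * Fzeta d ζ (c : ℝ) * (FnormGamma d + FnormGamma d) := by
        exact mul_le_mul_of_nonneg_left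
          (add_le_add (sum_Ffun_dTorus_left d hd M x) (sum_Ffun_dTorus_right d hd M y))
          (mul_nonneg (by positivity) hFzc)
    _ = 2 ^ (d + 1) * FnormGamma d * Fzeta d ζ (c : ℝ) := by ring
end

section
/- Every ζ ∈ 𝒮 satisfies ζ(r) ≤ 1 for all r ∈ [0,∞). Moreover, for every integer d ≥ 1, every ζ ∈ 𝒮, every even integer M ≥ 2, every localization datum L in Λ(M), and every x ∈ Λ(M): ∑_{y∈Λ(M)} F_ζ(d^Λ_L(x,y)) ≤ ζ(dist(x,L))·‖F‖_Γ ≤ ‖F‖_Γ. (Lemma C.1.) -/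
open scoped BigOperators

/-! ### Auxiliary lemmas -/

lemma zeta_le_one' (ζ : ℝ → ℝ) (hpos : ∀ r : ℝ, 0 ≤ r → 0 < ζ r)
    (hbdd : BddAbove (ζ '' Set.Ici (0 : ℝ)))
    (hsup : ∀ r s : ℝ, 0 ≤ r → 0 ≤ s → ζ r * ζ s ≤ ζ (r + s)) :
    ∀ r : ℝ, 0 ≤ r → ζ r ≤ 1 := by
  obtain ⟨b, hb⟩ := hbdd
  intro r hr
  by_contra hgt
  push_neg at hgt
  have key : ∀ n : ℕ, ζ r ^ (n + 1) ≤ ζ (((n : ℝ) + 1) * r) := by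
    intro n
    induction n with
    | zero => simp
    | succ n ih =>
      have h1 : (0:ℝ) ≤ ((n:ℝ) + 1) * r := by positivity
      calc ζ r ^ (n + 1 + 1) = ζ r ^ (n + 1) * ζ r := by ring
        _ ≤ ζ (((n:ℝ)+1)*r) * ζ r :=
            mul_le_mul_of_nonneg_right ih (hpos r hr).le
        _ ≤ ζ (((n:ℝ)+1)*r + r) := hsup _ _ h1 hr
        _ = ζ ((((n+1:ℕ):ℝ)+1)*r) := by push_cast; ring_nf
  obtain ⟨n, hn⟩ := pow_unbounded_of_one_lt b hgt
  have h2 : ζ (((n:ℝ)+1) * r) ≤ b :=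
    hb ⟨((n:ℝ)+1)*r, Set.mem_Ici.mpr (by positivity), rfl⟩
  have h3 : ζ r ^ n ≤ ζ r ^ (n+1) := pow_le_pow_right₀ (by linarith) (Nat.le_succ n)
  linarith [key n]

lemma Ffun_nonneg (d : ℕ) (r : ℝ) (hr : 0 ≤ r) : 0 ≤ Ffun d r := by
  unfold Ffun; positivity

lemma summable_G (p : ℝ) (hp : 1 < p) :
    Summable (fun m : ℤ => ((1 + |(m:ℝ)|) ^ p)⁻¹) := by
  have h1 : Summable (fun m : ℤ => 1 / |(m:ℝ) + (1/2 : ℝ)| ^ p) :=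
    (Real.summable_one_div_int_add_rpow (1/2) p).mpr hp
  refine h1.of_nonneg_of_le (fun m => by positivity) (fun m => ?_)
  have hne : ((m:ℝ) + 1/2) ≠ 0 := by
    intro h
    have h2 : ((2*m + 1 : ℤ) : ℝ) = 0 := by push_cast; linarith
    have h3 : (2*m + 1 : ℤ) = 0 := by exact_mod_cast h2
    omega
  have habs : (0:ℝ) < |(m:ℝ) + 1/2| := abs_pos.mpr hne
  have hle : |(m:ℝ) + 1/2| ≤ 1 + |(m:ℝ)| := by
    calc |(m:ℝ) + 1/2| ≤ |(m:ℝ)| + |(1/2:ℝ)| := abs_add_le _ _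
      _ ≤ 1 + |(m:ℝ)| := by rw [abs_of_nonneg (by norm_num : (0:ℝ) ≤ 1/2)]; linarith
  rw [one_div]
  exact inv_anti₀ (Real.rpow_pos_of_pos habs p)
    (Real.rpow_le_rpow habs.le hle (by linarith))

lemma summable_pi_prod (G : ℤ → ℝ) (hG0 : ∀ m, 0 ≤ G m) (hG : Summable G) :
    ∀ d : ℕ, Summable (fun y : Fin d → ℤ => ∏ j, G (y j)) := by
  intro d
  induction d with
  | zero =>
    haveI : Finite (Fin 0 → ℤ) := Finite.of_subsingleton
    exact Summable.of_finite
  | succ d ih =>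
    have h2 : Summable (fun q : ℤ × (Fin d → ℤ) => G q.1 * ∏ j, G (q.2 j)) := by
      apply Summable.mul_of_nonneg hG ih
      · exact fun m => hG0 m
      · exact fun y => Finset.prod_nonneg fun j _ => hG0 _
    have h3 : Summable ((fun y : Fin (d+1) → ℤ => ∏ j, G (y j)) ∘
        (Fin.consEquiv (fun _ => ℤ))) := by
      refine h2.congr ?_
      rintro ⟨a, y⟩
      simp [Fin.consEquiv, Fin.prod_univ_succ]
    exact (Equiv.summable_iff _).mp h3

lemma summable_Ffun (d : ℕ) (hd : 1 ≤ d) :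
    Summable (fun y : Fin d → ℤ => Ffun d (l1norm y)) := by
  have hd0 : (0:ℝ) < d := by exact_mod_cast hd
  set p : ℝ := (d+1)/d with hpdef
  have hp : 1 < p := by rw [hpdef, lt_div_iff₀ hd0]; linarith
  have hp0 : (0:ℝ) ≤ p := by positivity
  set G : ℤ → ℝ := fun m => ((1 + |(m:ℝ)|) ^ p)⁻¹ with hGdef
  have hG0 : ∀ m, 0 ≤ G m := fun m => by rw [hGdef]; positivity
  have hprod := summable_pi_prod G hG0 (summable_G p hp) d
  refine hprod.of_nonneg_of_le (fun y => Ffun_nonneg d _ (by positivity)) (fun y => ?_)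
  set S : ℝ := 1 + (l1norm y : ℝ) with hSdef
  have hS1 : (1:ℝ) ≤ S := by rw [hSdef]; have := Nat.cast_nonneg (α := ℝ) (l1norm y); linarith
  have hcast : (l1norm y : ℝ) = ∑ j, |((y j : ℤ) : ℝ)| := by
    unfold l1norm; push_cast [Nat.cast_natAbs]; rfl
  have hfac : ∀ j, (1:ℝ) + |((y j : ℤ) : ℝ)| ≤ S := by
    intro j
    have : |((y j : ℤ) : ℝ)| ≤ ∑ i, |((y i : ℤ) : ℝ)| :=
      Finset.single_le_sum (f := fun i => |((y i : ℤ) : ℝ)|) (fun i _ => abs_nonneg _)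
        (Finset.mem_univ j)
    rw [hSdef, hcast]; linarith
  have hprodle : (∏ j, ((1:ℝ) + |((y j : ℤ) : ℝ)|)) ≤ S ^ d := by
    calc (∏ j, ((1:ℝ) + |((y j : ℤ) : ℝ)|)) ≤ ∏ _j : Fin d, S :=
        Finset.prod_le_prod (fun j _ => by positivity) (fun j _ => hfac j)
      _ = S ^ d := by rw [Finset.prod_const, Finset.card_univ, Fintype.card_fin]
  have hrpow : (∏ j, ((1:ℝ) + |((y j : ℤ) : ℝ)|)) ^ p ≤ S ^ (d + 1) := by
    calc (∏ j, ((1:ℝ) + |((y j : ℤ) : ℝ)|)) ^ p ≤ (S ^ d) ^ p :=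
        Real.rpow_le_rpow (Finset.prod_nonneg fun j _ => by positivity) hprodle hp0
      _ = S ^ ((d:ℝ) * p) := by
          rw [← Real.rpow_natCast S d, ← Real.rpow_mul (by linarith : (0:ℝ) ≤ S)]
      _ = S ^ (((d+1:ℕ)):ℝ) := by
          congr 1
          rw [hpdef]
          field_simp
          push_cast
          ring
      _ = S ^ (d + 1) := by rw [Real.rpow_natCast]
  have hGprod : (∏ j, G (y j)) = ((∏ j, ((1:ℝ) + |((y j : ℤ) : ℝ)|)) ^ p)⁻¹ := by
    simp only [hGdef]
    rw [Finset.prod_inv_distrib, Real.finset_prod_rpow _ _ (fun j _ => by positivity) p]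
  rw [hGprod]
  unfold Ffun
  rw [← hSdef]
  exact inv_anti₀ (by positivity) hrpow

/-- Minimal-absolute-value integer representative. -/
def repZ (M : ℕ) (w : ZMod M) : ℤ :=
  if 2 * w.val ≤ M then (w.val : ℤ) else (w.val : ℤ) - M

lemma repZ_cast (M : ℕ) [NeZero M] (w : ZMod M) : ((repZ M w : ℤ) : ZMod M) = w := by
  unfold repZ
  split
  · push_cast
    simp [ZMod.natCast_val, ZMod.cast_id]
  · push_cast
    simp [ZMod.natCast_val, ZMod.cast_id, ZMod.natCast_self]

lemma repZ_natAbs (M : ℕ) [NeZero M] (w : ZMod M) :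
    (repZ M w).natAbs = min w.val (M - w.val) := by
  have hv : w.val < M := ZMod.val_lt w
  unfold repZ
  split <;> omega

/-- Lemma C.1. Every `ζ ∈ 𝒮` satisfies `ζ ≤ 1` on `[0,∞)`; moreover for every
`d ≥ 1`, `ζ ∈ 𝒮`, even `M ≥ 2`, localization datum `L` and `x ∈ Λ(M)`:
`∑_{y∈Λ(M)} F_ζ(d^Λ_L(x,y)) ≤ ζ(dist(x,L))·‖F‖_Γ ≤ ‖F‖_Γ`. -/
theorem statement6 :
    (∀ ζ : ℝ → ℝ, InS ζ → ∀ r : ℝ, 0 ≤ r → ζ r ≤ 1) ∧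
    (∀ (d : ℕ), 1 ≤ d → ∀ ζ : ℝ → ℝ, InS ζ →
      ∀ (M : ℕ) (_ : NeZero M), Even M → 2 ≤ M →
      ∀ (ℓ : Fin d → Bool) (l : Fin d → ZMod M) (x : Fin d → ZMod M),
        (∑ y : Fin d → ZMod M, Fzeta d ζ (dTorusL ℓ l x y)) ≤
            ζ (distLoc ℓ l x) * FnormGamma d ∧
          ζ (distLoc ℓ l x) * FnormGamma d ≤ FnormGamma d) := by
  constructor
  · rintro ζ ⟨hpos, hbdd, hmono, hsup, -⟩
    exact zeta_le_one' ζ hpos hbdd hsup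
  · rintro d hd ζ ⟨hpos, hbdd, hmono, hsup, -⟩ M hM hMeven hM2 ℓ l x
    haveI := hM
    classical
    have hζ1 : ∀ r : ℝ, 0 ≤ r → ζ r ≤ 1 := zeta_le_one' ζ hpos hbdd hsup
    have hsum := summable_Ffun d hd
    have hζx0 : 0 ≤ ζ (distLoc ℓ l x) := (hpos _ (Nat.cast_nonneg _)).le
    -- step 2: termwise comparison
    have hstep2 : (∑ y : Fin d → ZMod M, Fzeta d ζ (dTorusL ℓ l x y)) ≤
        ζ (distLoc ℓ l x) * ∑ y : Fin d → ZMod M, Ffun d (dTorus x y) := by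
      rw [Finset.mul_sum]
      apply Finset.sum_le_sum
      intro y _
      have h1 : (distLoc ℓ l x : ℝ) ≤ (dTorusL ℓ l x y : ℝ) := by
        have : distLoc ℓ l x ≤ dTorusL ℓ l x y := by unfold dTorusL; omega
        exact_mod_cast this
      have h2 : (dTorus x y : ℝ) ≤ (dTorusL ℓ l x y : ℝ) := by
        have : dTorus x y ≤ dTorusL ℓ l x y := by unfold dTorusL; omega
        exact_mod_cast this
      have hFz : Fzeta d ζ (dTorusL ℓ l x y) =
          ζ (dTorusL ℓ l x y) * Ffun d (dTorusL ℓ l x y) := rfl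
      rw [hFz]
      exact mul_le_mul (hmono _ _ (Nat.cast_nonneg _) h1)
        (Ffun_anti d (Nat.cast_nonneg _) h2)
        (Ffun_nonneg d _ (Nat.cast_nonneg _)) hζx0
    -- step 3: injection into ℤ^d
    have hstep3 : (∑ y : Fin d → ZMod M, Ffun d (dTorus x y)) ≤ FnormGamma d := by
      set ι : (Fin d → ZMod M) → (Fin d → ℤ) := fun y j => repZ M (y j - x j) with hι
      have hinj : Function.Injective ι := by
        intro y y' h
        funext j
        have hj : repZ M (y j - x j) = repZ M (y' j - x j) := congrFun h j
        have := repZ_cast M (y j - x j)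
        rw [hj, repZ_cast] at this
        have : y j - x j = y' j - x j := this.symm
        linear_combination (norm := module) this
      have hval : ∀ y, l1norm (ι y) = dTorus x y := by
        intro y
        unfold l1norm dTorus torusD
        apply Finset.sum_congr rfl
        intro j _
        rw [hι]
        exact repZ_natAbs M (y j - x j)
      calc (∑ y : Fin d → ZMod M, Ffun d (dTorus x y))
          = ∑ y : Fin d → ZMod M, Ffun d (l1norm (ι y)) := by
            apply Finset.sum_congr rfl
            intro y _
            rw [hval]
        _ = ∑ z ∈ Finset.univ.image ι, Ffun d (l1norm z) := by
            rw [Finset.sum_image (fun a _ b _ h => hinj h)]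
        _ ≤ FnormGamma d :=
            Summable.sum_le_tsum _ (fun z _ => Ffun_nonneg d _ (by positivity)) hsum
    have hN0 : 0 ≤ FnormGamma d :=
      tsum_nonneg fun y => Ffun_nonneg d _ (by positivity)
    refine ⟨le_trans hstep2 (mul_le_mul_of_nonneg_left hstep3 hζx0), ?_⟩
    calc ζ (distLoc ℓ l x) * FnormGamma d ≤ 1 * FnormGamma d :=
        mul_le_mul_of_nonneg_right (hζ1 _ (Nat.cast_nonneg _)) hN0
      _ = FnormGamma d := one_mul _
end

section
/- Let f : [0,∞) → (0,∞) be a function such that sup_{r∈[0,∞)} r^n f(r) < ∞ for every n ∈ ℕ₀. Then there exist a function ζ ∈ 𝒮 and a constant c > 0 such that c·f(r) ≤ ζ(r) for all r ∈ [0,∞). (Lemma B.1(b).) -/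
set_option maxHeartbeats 1000000

private lemma log_one_add_le {x : ℝ} (hx : 0 ≤ x) : Real.log (1 + x) ≤ x := by
  have := Real.log_le_sub_one_of_pos (x := 1 + x) (by linarith)
  linarith

private lemma log_one_add_nonneg {x : ℝ} (hx : 0 ≤ x) : 0 ≤ Real.log (1 + x) :=
  Real.log_nonneg (by linarith)

private lemma aux_summable (R : ℕ → ℝ) (hpow : ∀ n, (2:ℝ)^n ≤ R n)
    {r : ℝ} (hr : 0 ≤ r) : Summable (fun n => Real.log (1 + r / R n)) := by
  have hRpos : ∀ n, (0:ℝ) < R n := fun n => lt_of_lt_of_le (by positivity) (hpow n)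
  apply Summable.of_nonneg_of_le (f := fun n => r * (1/2)^n)
  · intro n; exact log_one_add_nonneg (div_nonneg hr (hRpos n).le)
  · intro n
    calc Real.log (1 + r / R n) ≤ r / R n := log_one_add_le (div_nonneg hr (hRpos n).le)
      _ ≤ r / 2^n := by gcongr; exact hpow n
      _ = r * (1/2)^n := by rw [one_div, inv_pow]; ring
  · exact summable_geometric_two.mul_left r

private lemma aux_tail (R : ℕ → ℝ) (hpow : ∀ n, (2:ℝ)^n ≤ R n)
    (hRg : ∀ N n, 2 ^ n * R N ≤ R (N + n)) {r : ℝ} (hr : 0 ≤ r)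
    (N : ℕ) (hrN : r ≤ R N) : ∑' n : ℕ, Real.log (1 + r / R (n + N)) ≤ 2 := by
  have hRpos : ∀ n, (0:ℝ) < R n := fun n => lt_of_lt_of_le (by positivity) (hpow n)
  have h1 : ∀ n : ℕ, Real.log (1 + r / R (n + N)) ≤ (1/2:ℝ)^n := by
    intro n
    have hg : (2:ℝ)^n * R N ≤ R (N + n) := hRg N n
    have key : r / R (n + N) ≤ (1/2:ℝ)^n := by
      rw [div_le_iff₀ (hRpos _)]
      have e1 : ((1/2:ℝ)^n) * ((2:ℝ)^n * R N) = R N := by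
        rw [← mul_assoc, ← mul_pow]; norm_num
      calc r ≤ R N := hrN
        _ = (1/2:ℝ)^n * ((2:ℝ)^n * R N) := e1.symm
        _ ≤ (1/2:ℝ)^n * R (N + n) := by
            apply mul_le_mul_of_nonneg_left hg (by positivity)
        _ = (1/2:ℝ)^n * R (n + N) := by rw [Nat.add_comm]
    exact le_trans (log_one_add_le (div_nonneg hr (hRpos _).le)) key
  calc ∑' n : ℕ, Real.log (1 + r / R (n + N)) ≤ ∑' n : ℕ, (1/2:ℝ)^n := by
        apply Summable.tsum_le_tsum h1 _ summable_geometric_two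
        exact (summable_nat_add_iff N).mpr (aux_summable R hpow hr)
    _ = 2 := tsum_geometric_two

/-- Lemma B.1(b). If `f : [0,∞) → (0,∞)` decays faster than any inverse
power, then there exist `ζ ∈ 𝒮` and `c > 0` such that `c·f ≤ ζ` on `[0,∞)`. -/
theorem statement9 (f : ℝ → ℝ) (hf_pos : ∀ r : ℝ, 0 ≤ r → 0 < f r)
    (hf_dec : ∀ n : ℕ, ∃ C : ℝ, ∀ r : ℝ, 0 ≤ r → r ^ n * f r ≤ C) :
    ∃ (ζ : ℝ → ℝ) (c : ℝ), InS ζ ∧ 0 < c ∧ ∀ r : ℝ, 0 ≤ r → c * f r ≤ ζ r := by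
  choose C hC using hf_dec
  set D : ℕ → ℝ := fun n => max (C n) 1 with hDdef
  have hD1 : ∀ n, (1:ℝ) ≤ D n := fun n => le_max_right _ _
  have hDf : ∀ n r, 0 ≤ r → r ^ n * f r ≤ D n := fun n r hr => (hC n r hr).trans (le_max_left _ _)
  set E : ℕ → ℝ := fun n => 2 * ∑ k ∈ Finset.range (2*n+3), D k with hEdef
  have hsum1 : ∀ n, (1:ℝ) ≤ ∑ k ∈ Finset.range (2*n+3), D k := by
    intro n
    calc (1:ℝ) ≤ D 0 := hD1 0
      _ ≤ ∑ k ∈ Finset.range (2*n+3), D k :=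
          Finset.single_le_sum (fun i _ => zero_le_one.trans (hD1 i))
            (Finset.mem_range.mpr (by omega))
  have hE2 : ∀ n, (2:ℝ) ≤ E n := by intro n; have := hsum1 n; simp only [hEdef]; linarith
  have hEmono : Monotone E := by
    intro a b hab
    simp only [hEdef]
    have : ∑ k ∈ Finset.range (2*a+3), D k ≤ ∑ k ∈ Finset.range (2*b+3), D k := by
      apply Finset.sum_le_sum_of_subset_of_nonneg
      · exact Finset.range_subset_range.mpr (by omega)
      · intro i _ _; exact zero_le_one.trans (hD1 i)
    linarith
  have hED : ∀ n k, k ≤ 2*n+2 → D k ≤ E n := by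
    intro n k hk
    have h1 : D k ≤ ∑ j ∈ Finset.range (2*n+3), D j :=
      Finset.single_le_sum (fun i _ => zero_le_one.trans (hD1 i))
        (Finset.mem_range.mpr (by omega))
    have := hsum1 n
    simp only [hEdef]; linarith
  set R : ℕ → ℝ := fun n => 2^n * E n with hRdef
  have hpow : ∀ n, (2:ℝ)^n ≤ R n := by
    intro n
    have h1 := hE2 n
    have h2 : (0:ℝ) < 2^n := by positivity
    simp only [hRdef]; nlinarith
  have hR2 : ∀ n, (2:ℝ) ≤ R n := by
    intro n
    have h1 : (1:ℝ) ≤ 2^n := one_le_pow₀ (by norm_num)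
    have h2 := hE2 n
    simp only [hRdef]; nlinarith
  have hRpos : ∀ n, (0:ℝ) < R n := fun n => lt_of_lt_of_le two_pos (hR2 n)
  have hRg : ∀ N n, (2:ℝ)^n * R N ≤ R (N + n) := by
    intro N n
    simp only [hRdef]
    have h1 : E N ≤ E (N + n) := hEmono (Nat.le_add_right _ _)
    have h2 : (0:ℝ) < 2^(N+n) := by positivity
    have e1 : (2:ℝ)^n * (2^N * E N) = 2^(N+n) * E N := by rw [pow_add]; ring
    rw [e1]
    nlinarith
  have hRmono : Monotone R := by
    intro a b hab
    obtain ⟨n, rfl⟩ := Nat.exists_eq_add_of_le hab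
    have h1 : (1:ℝ) ≤ 2^n := one_le_pow₀ (by norm_num)
    have := hRg a n
    nlinarith [hRpos a]
  set h : ℝ → ℝ := fun r => ∑' n : ℕ, Real.log (1 + r / R n) with hhdef
  have hsum : ∀ {r : ℝ}, 0 ≤ r → Summable (fun n => Real.log (1 + r / R n)) :=
    fun hr => aux_summable R hpow hr
  have hh0 : ∀ {r : ℝ}, 0 ≤ r → 0 ≤ h r := by
    intro r hr
    exact tsum_nonneg (fun n => log_one_add_nonneg (div_nonneg hr (hRpos n).le))
  have hhmono : ∀ r s : ℝ, 0 ≤ r → r ≤ s → h r ≤ h s := by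
    intro r s hr hrs
    apply Summable.tsum_le_tsum _ (hsum hr) (hsum (hr.trans hrs))
    intro n
    have := hRpos n
    apply Real.log_le_log (by positivity)
    have : r / R n ≤ s / R n := by gcongr
    linarith
  have hhsub : ∀ r s : ℝ, 0 ≤ r → 0 ≤ s → h (r+s) ≤ h r + h s := by
    intro r s hr hs
    calc h (r+s) ≤ ∑' n : ℕ, (Real.log (1 + r / R n) + Real.log (1 + s / R n)) := by
          apply Summable.tsum_le_tsum _ (hsum (by positivity)) ((hsum hr).add (hsum hs))
          intro n
          have hRp := hRpos n
          rw [← Real.log_mul (by positivity) (by positivity)]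
          apply Real.log_le_log (by positivity)
          have key : (1 + r / R n) * (1 + s / R n) - (1 + (r+s) / R n) = (r/R n) * (s/R n) := by
            field_simp; ring
          nlinarith [mul_nonneg (div_nonneg hr hRp.le) (div_nonneg hs hRp.le)]
      _ = h r + h s := Summable.tsum_add (hsum hr) (hsum hs)
  have hlow : ∀ (n : ℕ) (r : ℝ), 0 ≤ r → (n:ℝ) * Real.log (1 + r / R n) ≤ h r := by
    intro n r hr
    have step : ∀ k ∈ Finset.range n, Real.log (1 + r / R n) ≤ Real.log (1 + r / R k) := by
      intro k hk
      have hk' : k ≤ n := le_of_lt (Finset.mem_range.mp hk)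
      have hRk := hRpos k
      have hRn := hRpos n
      apply Real.log_le_log (by positivity)
      have : r / R n ≤ r / R k := div_le_div_of_nonneg_left hr hRk (hRmono hk')
      linarith
    calc (n:ℝ) * Real.log (1 + r / R n)
        = ∑ _k ∈ Finset.range n, Real.log (1 + r / R n) := by
          rw [Finset.sum_const, Finset.card_range, nsmul_eq_mul]
      _ ≤ ∑ k ∈ Finset.range n, Real.log (1 + r / R k) := Finset.sum_le_sum step
      _ ≤ h r := Summable.sum_le_tsum _ (fun k _ => log_one_add_nonneg (div_nonneg hr (hRpos k).le)) (hsum hr)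
  -- upper bound for domination
  have hub : ∀ r : ℝ, 0 ≤ r → h r + Real.log (f r) ≤ 2 + Real.log (D 0) := by
    intro r hr
    have hD0 : (0:ℝ) ≤ Real.log (D 0) := Real.log_nonneg (hD1 0)
    obtain ⟨N, hNlt, hNmin⟩ : ∃ N, r < R N ∧ ∀ k < N, R k ≤ r := by
      have hex : ∃ n, r < R n := by
        obtain ⟨n, hn⟩ := pow_unbounded_of_one_lt r (one_lt_two (α := ℝ))
        exact ⟨n, hn.trans_le (hpow n)⟩
      exact ⟨Nat.find hex, Nat.find_spec hex, fun k hk => not_lt.mp (Nat.find_min hex hk)⟩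
    have hdecomp : h r = (∑ k ∈ Finset.range N, Real.log (1 + r / R k))
        + ∑' n : ℕ, Real.log (1 + r / R (n + N)) := (Summable.sum_add_tsum_nat_add N (hsum hr)).symm
    have htail : ∑' n : ℕ, Real.log (1 + r / R (n + N)) ≤ 2 := aux_tail R hpow hRg hr N hNlt.le
    rcases Nat.eq_zero_or_pos N with hN0 | hN1
    · subst hN0
      have hfr : f r ≤ D 0 := by have := hDf 0 r hr; simpa using this
      have : Real.log (f r) ≤ Real.log (D 0) := Real.log_le_log (hf_pos r hr) hfr
      rw [hdecomp]
      simp only [Finset.range_zero, Finset.sum_empty, zero_add]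
      linarith
    · have hrR : R (N-1) ≤ r := hNmin (N-1) (by omega)
      have hr2 : (2:ℝ) ≤ r := (hR2 _).trans hrR
      have hlr : (0:ℝ) ≤ Real.log r := Real.log_nonneg (by linarith)
      have hfront : ∑ k ∈ Finset.range N, Real.log (1 + r / R k) ≤ (N:ℝ) * Real.log r := by
        have step : ∀ k ∈ Finset.range N, Real.log (1 + r / R k) ≤ Real.log r := by
          intro k _
          have h2k := hR2 k
          apply Real.log_le_log (by positivity)
          have : r / R k ≤ r / 2 := div_le_div_of_nonneg_left (by linarith) two_pos h2k
          linarith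
        calc ∑ k ∈ Finset.range N, Real.log (1 + r / R k)
            ≤ ∑ _k ∈ Finset.range N, Real.log r := Finset.sum_le_sum step
          _ = (N:ℝ) * Real.log r := by rw [Finset.sum_const, Finset.card_range, nsmul_eq_mul]
      have hflog : Real.log (f r) ≤ Real.log (D (2*N)) - 2*(N:ℝ) * Real.log r := by
        have hrpos : (0:ℝ) < r := by linarith
        have h1 : f r ≤ D (2*N) / r^(2*N) := by
          rw [le_div_iff₀ (by positivity)]
          have := hDf (2*N) r hr
          nlinarith
        calc Real.log (f r) ≤ Real.log (D (2*N) / r^(2*N)) := Real.log_le_log (hf_pos r hr) h1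
          _ = Real.log (D (2*N)) - 2*(N:ℝ) * Real.log r := by
              rw [Real.log_div (by positivity) (by positivity), Real.log_pow]
              push_cast; ring
      have hDR : Real.log (D (2*N)) ≤ (N:ℝ) * Real.log r := by
        have h1 : D (2*N) ≤ E (N-1) := hED (N-1) (2*N) (by omega)
        have h2 : E (N-1) ≤ R (N-1) := by
          have hp : (1:ℝ) ≤ 2^(N-1) := one_le_pow₀ (by norm_num)
          have := hE2 (N-1)
          simp only [hRdef]; nlinarith
        have h3 : D (2*N) ≤ r := le_trans (h1.trans h2) hrR
        have h4 : Real.log (D (2*N)) ≤ Real.log r :=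
          Real.log_le_log (lt_of_lt_of_le one_pos (hD1 _)) h3
        have hN1' : (1:ℝ) ≤ (N:ℝ) := by exact_mod_cast hN1
        nlinarith
      rw [hdecomp]
      nlinarith
  -- assemble
  refine ⟨fun r => Real.exp (-h r), Real.exp (-(2 + Real.log (D 0))),
    ⟨fun r _ => Real.exp_pos _, ⟨1, ?_⟩, ?_, ?_, ?_⟩, Real.exp_pos _, ?_⟩
  · rintro x ⟨r, hr, rfl⟩
    have : 0 ≤ h r := hh0 (Set.mem_Ici.mp hr)
    exact Real.exp_le_one_iff.mpr (by linarith)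
  · intro r s hr hrs
    exact Real.exp_le_exp.mpr (neg_le_neg (hhmono r s hr hrs))
  · intro r s hr hs
    rw [← Real.exp_add]
    exact Real.exp_le_exp.mpr (by have := hhsub r s hr hs; linarith)
  · intro n
    refine ⟨R n ^ n, fun r hr => ?_⟩
    have hx : (0:ℝ) < 1 + r / R n := by have := hRpos n; positivity
    have h1 : Real.exp (-h r) ≤ ((1 + r / R n)^n)⁻¹ := by
      have := hlow n r hr
      calc Real.exp (-h r) ≤ Real.exp (-((n:ℝ) * Real.log (1 + r / R n))) :=
            Real.exp_le_exp.mpr (by linarith)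
        _ = ((1 + r / R n)^n)⁻¹ := by
            rw [Real.exp_neg, Real.exp_nat_mul, Real.exp_log hx]
    have h2 : r^n * ((1 + r / R n)^n)⁻¹ ≤ R n ^ n := by
      rw [mul_inv_le_iff₀ (by positivity)]
      have e1 : R n ^ n * (1 + r / R n)^n = (R n + r)^n := by
        rw [← mul_pow]
        congr 1
        rw [mul_add, mul_one, mul_div_assoc', mul_comm (R n) r, mul_div_assoc, div_self (hRpos n).ne', mul_one]
      rw [e1]
      exact pow_le_pow_left₀ hr (by linarith [hRpos n]) n
    calc r^n * Real.exp (-h r) ≤ r^n * ((1 + r / R n)^n)⁻¹ := by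
          apply mul_le_mul_of_nonneg_left h1 (by positivity)
      _ ≤ R n ^ n := h2
  · intro r hr
    have hfr := hf_pos r hr
    have : Real.exp (-(2 + Real.log (D 0))) * f r
        = Real.exp (Real.log (f r) - (2 + Real.log (D 0))) := by
      rw [Real.exp_sub, Real.exp_log hfr, Real.exp_neg, div_eq_mul_inv, mul_comm]
    rw [this]
    exact Real.exp_le_exp.mpr (by have := hub r hr; linarith)
end

section
/- Let ζ ∈ 𝒮 and k ∈ ℕ₀. Then C := ∑_{z∈ℤ^k} ζ(‖z‖₁) is finite, and for every integer d ≥ 1, every even integer M ≥ 2, and every localization datum L = (ℓ, l) in Λ(M) with |ℓ| = k, one has ∑_{x∈Λ(M)} ζ(dist(x,L)) ≤ C · M^{d−k}. -/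
open scoped BigOperators

noncomputable def hfun (m : ℤ) : ℝ := ((1 + (m.natAbs : ℝ)) ^ 2)⁻¹

lemma hfun_pos (m : ℤ) : 0 < hfun m := by
  unfold hfun; positivity

lemma hfun_summable : Summable hfun := by
  have hnat : Summable (fun n : ℕ => ((1 + (n : ℝ)) ^ 2)⁻¹) := by
    have h1 : Summable (fun n : ℕ => 1 / (n : ℝ) ^ 2) :=
      (Real.summable_one_div_nat_pow).2 (by norm_num)
    have h2 := (summable_nat_add_iff (f := fun n : ℕ => 1 / (n : ℝ) ^ 2) 1).2 h1
    apply h2.congr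
    intro n
    push_cast
    rw [one_div, add_comm (n:ℝ) 1]
  apply Summable.of_nat_of_neg
  · apply hnat.congr; intro n; simp [hfun]
  · apply hnat.congr; intro n; simp [hfun]

lemma prod_summable (k : ℕ) : Summable (fun z : Fin k → ℤ => ∏ j, hfun (z j)) := by
  induction k with
  | zero => exact Summable.of_finite
  | succ n ih =>
    have h := Summable.mul_of_nonneg hfun_summable ih
      (fun m => (hfun_pos m).le)
      (fun z => Finset.prod_nonneg fun j _ => (hfun_pos _).le)
    rw [← Equiv.summable_iff (Fin.consEquiv (fun _ : Fin (n + 1) => ℤ))]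
    apply h.congr
    rintro ⟨a, z⟩
    simp [Fin.prod_univ_succ, Fin.consEquiv]

def centRep (M : ℕ) (w : ZMod M) : ℤ :=
  if 2 * w.val ≤ M then (w.val : ℤ) else (w.val : ℤ) - M

lemma centRep_natAbs {M : ℕ} [NeZero M] (w : ZMod M) :
    (centRep M w).natAbs = min w.val (M - w.val) := by
  have hv : w.val < M := ZMod.val_lt w
  unfold centRep
  split_ifs with h <;> omega

lemma cast_centRep {M : ℕ} [NeZero M] (w : ZMod M) : ((centRep M w : ℤ) : ZMod M) = w := by
  unfold centRep
  split_ifs with h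
  · push_cast; simp [ZMod.natCast_val, ZMod.cast_id]
  · push_cast; simp [ZMod.natCast_val, ZMod.cast_id, ZMod.natCast_self]

lemma centRep_inj {M : ℕ} [NeZero M] : Function.Injective (centRep M) := by
  intro a b h
  have := congrArg (fun z : ℤ => (z : ZMod M)) h
  simpa [cast_centRep] using this

lemma torusD_eq_centRep {M : ℕ} [NeZero M] (u v : ZMod M) :
    torusD M u v = (centRep M (u - v)).natAbs := by
  rw [centRep_natAbs]
  unfold torusD
  have h : v - u = -(u - v) := by ring
  rw [h, ZMod.neg_val]
  have hv : (u - v).val < M := ZMod.val_lt _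
  split_ifs with h0
  · simp [h0]
  · have : (u - v).val ≠ 0 := fun hh => h0 ((ZMod.val_eq_zero _).1 hh)
    omega

lemma zeta_decay (ζ : ℝ → ℝ) (hζ : InS ζ) (k : ℕ) :
    ∃ C0 : ℝ, 0 ≤ C0 ∧ ∀ r : ℝ, 0 ≤ r → ζ r ≤ C0 * ((1 + r) ^ (2 * k))⁻¹ := by
  obtain ⟨hpos, ⟨B, hB⟩, hmono, hsuper, hdecay⟩ := hζ
  obtain ⟨C1, hC1⟩ := hdecay (2 * k)
  refine ⟨2 ^ (2 * k) * (max B 0 + max C1 0), by positivity, ?_⟩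
  intro r hr
  have hζr : 0 < ζ r := hpos r hr
  have hbb : ζ r ≤ max B 0 := le_trans (hB ⟨r, hr, rfl⟩) (le_max_left _ _)
  have hcc : r ^ (2 * k) * ζ r ≤ max C1 0 := le_trans (hC1 r hr) (le_max_left _ _)
  have hXpos : (0:ℝ) < (1 + r) ^ (2 * k) := by positivity
  rw [← div_eq_mul_inv, le_div_iff₀ hXpos]
  have h2pos : (0:ℝ) < 2 ^ (2 * k) := by positivity
  have hpow : (1 + r) ^ (2 * k) ≤ 2 ^ (2 * k) * (1 + r ^ (2 * k)) := by
    rcases le_total r 1 with h1 | h1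
    · have ha : (1 + r) ^ (2 * k) ≤ 2 ^ (2 * k) :=
        pow_le_pow_left₀ (by linarith) (by linarith) _
      have hb : (0:ℝ) ≤ r ^ (2 * k) := by positivity
      nlinarith
    · have ha : (1 + r) ^ (2 * k) ≤ (2 * r) ^ (2 * k) :=
        pow_le_pow_left₀ (by linarith) (by linarith) _
      rw [mul_pow] at ha
      nlinarith
  nlinarith

lemma zeta_le_prod (ζ : ℝ → ℝ) (hζ : InS ζ) (k : ℕ) :
    ∃ C0 : ℝ, 0 ≤ C0 ∧ ∀ z : Fin k → ℤ, ζ (l1norm z) ≤ C0 * ∏ j, hfun (z j) := by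
  obtain ⟨C0, hC0, hle⟩ := zeta_decay ζ hζ k
  refine ⟨C0, hC0, ?_⟩
  intro z
  set r : ℝ := (l1norm z : ℝ) with hrdef
  have hr : 0 ≤ r := Nat.cast_nonneg _
  have hterm : ∀ j : Fin k, ((z j).natAbs : ℝ) ≤ r := by
    intro j
    have : (z j).natAbs ≤ l1norm z := Finset.single_le_sum
      (f := fun j => (z j).natAbs) (fun _ _ => Nat.zero_le _) (Finset.mem_univ j)
    rw [hrdef]; exact_mod_cast this
  have hprod : ∏ j : Fin k, ((1 + ((z j).natAbs : ℝ)) ^ 2) ≤ (1 + r) ^ (2 * k) := by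
    calc ∏ j : Fin k, ((1 + ((z j).natAbs : ℝ)) ^ 2)
        ≤ ∏ _j : Fin k, ((1 + r) ^ 2) := by
          apply Finset.prod_le_prod
          · intro j _; positivity
          · intro j _
            exact pow_le_pow_left₀ (by positivity) (by linarith [hterm j]) _
      _ = ((1 + r) ^ 2) ^ k := by rw [Finset.prod_const, Finset.card_univ, Fintype.card_fin]
      _ = (1 + r) ^ (2 * k) := by rw [← pow_mul]
  have hprodpos : (0:ℝ) < ∏ j : Fin k, ((1 + ((z j).natAbs : ℝ)) ^ 2) := by
    apply Finset.prod_pos; intro j _; positivity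
  have hinv : ((1 + r) ^ (2 * k))⁻¹ ≤ ∏ j : Fin k, hfun (z j) := by
    have : ∏ j : Fin k, hfun (z j)
        = (∏ j : Fin k, ((1 + ((z j).natAbs : ℝ)) ^ 2))⁻¹ := by
      rw [← Finset.prod_inv_distrib]; rfl
    rw [this]
    exact inv_anti₀ hprodpos hprod
  calc ζ r ≤ C0 * ((1 + r) ^ (2 * k))⁻¹ := hle r hr
    _ ≤ C0 * ∏ j : Fin k, hfun (z j) := mul_le_mul_of_nonneg_left hinv hC0

/-- counting estimate of Lemma C.2. For `ζ ∈ 𝒮` and `k ∈ ℕ₀`,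
`C := ∑_{z∈ℤ^k} ζ(‖z‖₁)` is finite, and for every `d ≥ 1`, even `M ≥ 2`, and localization
datum `L = (ℓ,l)` in `Λ(M)` with `|ℓ| = k`: `∑_{x∈Λ(M)} ζ(dist(x,L)) ≤ C · M^{d−k}`. -/
theorem statement10 (ζ : ℝ → ℝ) (hζ : InS ζ) (k : ℕ) :
    Summable (fun z : Fin k → ℤ => ζ (l1norm z)) ∧
    ∀ (d : ℕ), 1 ≤ d → ∀ (M : ℕ) (_ : NeZero M), Even M → 2 ≤ M →
      ∀ (ℓ : Fin d → Bool) (l : Fin d → ZMod M),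
        (Finset.univ.filter fun j => ℓ j = true).card = k →
        ∑ x : Fin d → ZMod M, ζ (distLoc ℓ l x) ≤
          (∑' z : Fin k → ℤ, ζ (l1norm z)) * (M : ℝ) ^ (d - k) := by
  classical
  obtain ⟨C0, hC0, hzle⟩ := zeta_le_prod ζ hζ k
  have hζ0 : ∀ n : ℕ, 0 ≤ ζ n := fun n => (hζ.1 _ (Nat.cast_nonneg n)).le
  have hsummable : Summable (fun z : Fin k → ℤ => ζ (l1norm z)) :=
    Summable.of_nonneg_of_le (fun z => hζ0 _) (fun z => hzle z)
      ((prod_summable k).mul_left C0)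
  refine ⟨hsummable, ?_⟩
  intro d hd M instM hEven hM2 ℓ l hcard
  set p : Fin d → Prop := fun j => ℓ j = true with hp
  set e := Equiv.piEquivPiSubtypeProd p (fun _ : Fin d => ZMod M) with he
  set g : ({j // p j} → ZMod M) → ℕ := fun a => ∑ j : {j // p j}, torusD M (a j) (l j)
    with hg
  have hdist : ∀ (a : {j // p j} → ZMod M) (b : {j // ¬ p j} → ZMod M),
      distLoc ℓ l (e.symm (a, b)) = g a := by
    intro a b
    have h1 : distLoc ℓ l (e.symm (a, b))
        = ∑ j ∈ Finset.filter (fun j => p j) Finset.univ,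
            torusD M ((e.symm (a, b)) j) (l j) := by
      rw [distLoc, Finset.sum_filter]
    rw [h1, Finset.sum_subtype (p := p) _ (fun j => by simp) _]
    apply Finset.sum_congr rfl
    intro j _
    congr 1
    rw [he, Equiv.piEquivPiSubtypeProd_symm_apply, dif_pos j.2]
  -- cardinalities
  have hkA : Fintype.card {j // p j} = k := by
    rw [Fintype.card_subtype]; exact hcard
  have hcardB : Fintype.card ({j // ¬ p j} → ZMod M) = M ^ (d - k) := by
    rw [Fintype.card_fun, ZMod.card, Fintype.card_subtype_compl, hkA, Fintype.card_fin]
  -- the key bound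
  have key : ∑ a : {j // p j} → ZMod M, ζ (g a) ≤ ∑' z : Fin k → ℤ, ζ (l1norm z) := by
    set eqk : Fin k ≃ {j // p j} := (Fintype.equivFinOfCardEq hkA).symm with heqk
    set Ψ : ({j // p j} → ZMod M) → (Fin k → ℤ) :=
      fun a i => centRep M (a (eqk i) - l (eqk i)) with hΨ
    have hΨ1 : ∀ a, l1norm (Ψ a) = g a := by
      intro a
      have h2 : ∀ i : Fin k, (Ψ a i).natAbs = torusD M (a (eqk i)) (l (eqk i)) := by
        intro i; rw [hΨ]; exact (torusD_eq_centRep _ _).symm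
      calc l1norm (Ψ a) = ∑ i : Fin k, torusD M (a (eqk i)) (l (eqk i)) := by
            rw [l1norm]; exact Finset.sum_congr rfl fun i _ => h2 i
        _ = g a := Equiv.sum_comp eqk (fun j => torusD M (a j) (l j))
    have hΨinj : Function.Injective Ψ := by
      intro a a' h
      funext j
      have h2 := congrFun h (eqk.symm j)
      simp only [hΨ, Equiv.apply_symm_apply] at h2
      have h3 := centRep_inj h2
      exact sub_left_inj.mp h3
    calc ∑ a : {j // p j} → ZMod M, ζ (g a)
        = ∑ a : {j // p j} → ZMod M, ζ (l1norm (Ψ a)) := by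
          exact Finset.sum_congr rfl fun a _ => by rw [hΨ1]
      _ = ∑ z ∈ Finset.image Ψ Finset.univ, ζ (l1norm z) := by
          rw [Finset.sum_image (fun a _ a' _ h => hΨinj h)]
      _ ≤ ∑' z : Fin k → ℤ, ζ (l1norm z) :=
          Summable.sum_le_tsum _ (fun z _ => hζ0 _) hsummable
  -- put it together
  calc ∑ x : Fin d → ZMod M, ζ (distLoc ℓ l x)
      = ∑ y : ({j // p j} → ZMod M) × ({j // ¬ p j} → ZMod M),
          ζ (distLoc ℓ l (e.symm y)) := (Equiv.sum_comp e.symm _).symm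
    _ = ∑ a : {j // p j} → ZMod M, ∑ _b : {j // ¬ p j} → ZMod M, ζ (g a) := by
        rw [Fintype.sum_prod_type]
        exact Finset.sum_congr rfl fun a _ => Finset.sum_congr rfl fun b _ => by
          rw [hdist a b]
    _ = (Fintype.card ({j // ¬ p j} → ZMod M) : ℝ) * ∑ a : {j // p j} → ZMod M, ζ (g a) := by
        simp only [Finset.sum_const, Finset.card_univ, nsmul_eq_mul]
        rw [← Finset.mul_sum]
    _ ≤ (Fintype.card ({j // ¬ p j} → ZMod M) : ℝ) * ∑' z : Fin k → ℤ, ζ (l1norm z) :=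
        mul_le_mul_of_nonneg_left key (Nat.cast_nonneg _)
    _ = (∑' z : Fin k → ℤ, ζ (l1norm z)) * (M : ℝ) ^ (d - k) := by
        rw [hcardB]; push_cast; ring
end

section
/- Let d ≥ 1, ζ ∈ 𝒮, M ≥ 2 even, and let L = (ℓ, l) be a localization datum in Λ(M). Let (𝒜, ‖·‖) be a normed vector space, let Φ assign to each subset Z ⊆ Λ(M) an element Φ(Z) ∈ 𝒜 with Φ(∅) = 0, and suppose there is K ≥ 0 such that ∑_{Z⊆Λ(M): {x,y}⊆Z} ‖Φ(Z)‖ ≤ K·F_ζ(d^Λ_L(x,y)) for all x,y ∈ Λ(M). Then ‖∑_{Z⊆Λ(M)} Φ(Z)‖ ≤ C_ζ·K·M^{d−|ℓ|}, where C_ζ := ‖F‖_Γ · ∑_{z∈ℤ^{|ℓ|}} ζ(‖z‖₁) < ∞. (Lemma C.2: the norm of a local L-localized Hamiltonian grows at most like M^{d−|ℓ|}.) -/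
open scoped BigOperators

lemma summable_int_rpow (p : ℝ) (hp : 1 < p) :
    Summable (fun n : ℤ => ((1 + |(n : ℝ)|) ^ p)⁻¹) := by
  have hnat : Summable (fun n : ℕ => ((1 + (n : ℝ)) ^ p)⁻¹) := by
    have h1 : Summable (fun n : ℕ => (((n + 1 : ℕ) : ℝ) ^ p)⁻¹) :=
      (summable_nat_add_iff 1).mpr (Real.summable_nat_rpow_inv.mpr hp)
    apply h1.of_nonneg_of_le (fun n => by positivity)
    intro n
    apply inv_anti₀ (by positivity)
    apply Real.rpow_le_rpow (by positivity) (by push_cast; linarith) (by linarith)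
  apply Summable.of_nat_of_neg <;> simpa using hnat

lemma summable_pi_prod_s11 {k : ℕ} (g : ℤ → ℝ) (hg0 : ∀ n, 0 ≤ g n) (hg : Summable g) :
    Summable (fun z : Fin k → ℤ => ∏ j, g (z j)) := by
  induction k with
  | zero => exact summable_of_finite_support (Set.toFinite _)
  | succ k ih =>
    have := (hg.mul_of_nonneg ih hg0 (fun z => Finset.prod_nonneg fun j _ => hg0 _))
    have h2 := this.comp_injective (Fin.consEquiv (fun _ : Fin (k+1) => ℤ)).symm.injective
    apply h2.congr
    intro z
    simp [Fin.consEquiv, Fin.prod_univ_succ, Fin.tail]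

lemma prod_one_add_le {k : ℕ} (z : Fin k → ℤ) :
    ∏ j, (1 + |(z j : ℝ)|) ≤ (1 + (l1norm z : ℝ)) ^ k := by
  have h : ∀ j : Fin k, (1 + |(z j : ℝ)|) ≤ 1 + (l1norm z : ℝ) := by
    intro j
    have : (z j).natAbs ≤ l1norm z := Finset.single_le_sum (f := fun j => (z j).natAbs)
      (fun _ _ => Nat.zero_le _) (Finset.mem_univ j)
    have : ((z j).natAbs : ℝ) ≤ (l1norm z : ℝ) := by exact_mod_cast this
    rw [Nat.cast_natAbs] at this
    push_cast at this ⊢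
    linarith
  calc ∏ j, (1 + |(z j : ℝ)|) ≤ ∏ _j : Fin k, (1 + (l1norm z : ℝ)) :=
        Finset.prod_le_prod (fun j _ => by positivity) (fun j _ => h j)
    _ = (1 + (l1norm z : ℝ)) ^ k := by simp

lemma InS.pow_bound {ζ : ℝ → ℝ} (hζ : InS ζ) (m : ℕ) :
    ∃ C : ℝ, ∀ r : ℝ, 0 ≤ r → ζ r ≤ C * ((1 + r) ^ m)⁻¹ := by
  obtain ⟨hpos, ⟨B, hB⟩, hmono, hsuper, hdecay⟩ := hζ
  have hB' : ∀ r : ℝ, 0 ≤ r → ζ r ≤ B := fun r hr => hB ⟨r, hr, rfl⟩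
  obtain ⟨C', hC'⟩ := hdecay m
  refine ⟨2 ^ m * (B + C'), fun r hr => ?_⟩
  have h0 : (0:ℝ) < (1 + r) ^ m := by positivity
  rw [le_mul_inv_iff₀ h0, mul_comm]
  have hmax : (1 + r) ^ m ≤ 2 ^ m * (1 + r ^ m) := by
    have h1 : (1 + r) ≤ 2 * max 1 r := by
      rcases le_total r 1 with h | h
      · have := le_max_left (1:ℝ) r; linarith
      · have := le_max_right (1:ℝ) r; linarith
    have h2 : (max 1 r) ^ m ≤ 1 + r ^ m := by
      rcases le_total r 1 with h | h
      · rw [max_eq_left h]; simp; positivity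
      · rw [max_eq_right h]; nlinarith [pow_nonneg hr m]
    calc (1 + r) ^ m ≤ (2 * max 1 r) ^ m := pow_le_pow_left₀ (by linarith) h1 m
      _ = 2 ^ m * (max 1 r) ^ m := mul_pow 2 _ m
      _ ≤ 2 ^ m * (1 + r ^ m) := by
          have : (0:ℝ) ≤ 2 ^ m := by positivity
          nlinarith
  have hζr : 0 < ζ r := hpos r hr
  calc (1 + r) ^ m * ζ r ≤ (2 ^ m * (1 + r ^ m)) * ζ r := by nlinarith
    _ = 2 ^ m * (ζ r + r ^ m * ζ r) := by ring
    _ ≤ 2 ^ m * (B + C') := by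
        have h3 : ζ r + r ^ m * ζ r ≤ B + C' := add_le_add (hB' r hr) (hC' r hr)
        have : (0:ℝ) ≤ 2 ^ m := by positivity
        nlinarith

lemma summable_zeta {ζ : ℝ → ℝ} (hζ : InS ζ) (k : ℕ) :
    Summable (fun z : Fin k → ℤ => ζ (l1norm z)) := by
  obtain ⟨C, hC⟩ := hζ.pow_bound (2 * k)
  have hg : Summable (fun n : ℤ => ((1 + |(n:ℝ)|) ^ (2:ℕ))⁻¹) := by
    have := summable_int_rpow 2 (by norm_num)
    apply this.congr
    intro n
    rw [show ((2:ℝ)) = ((2:ℕ):ℝ) by norm_num, Real.rpow_natCast]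
  have hprod := (summable_pi_prod_s11 (k := k) _ (fun n => by positivity) hg).mul_left C
  apply hprod.of_nonneg_of_le (fun z => (hζ.1 _ (by positivity)).le)
  intro z
  have h1 : ∀ j : Fin k, (0:ℝ) ≤ 1 + |(z j : ℝ)| := fun j => by positivity
  have key : ∏ j, ((1 + |(z j : ℝ)|) ^ (2:ℕ)) ≤ (1 + (l1norm z : ℝ)) ^ (2 * k) := by
    calc ∏ j, ((1 + |(z j : ℝ)|) ^ (2:ℕ)) = (∏ j, (1 + |(z j : ℝ)|)) ^ (2:ℕ) := by
          rw [Finset.prod_pow]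
      _ ≤ ((1 + (l1norm z : ℝ)) ^ k) ^ (2:ℕ) := by
          apply pow_le_pow_left₀ (Finset.prod_nonneg fun j _ => h1 j) (prod_one_add_le z)
      _ = (1 + (l1norm z : ℝ)) ^ (2 * k) := by rw [← pow_mul, mul_comm]
  have hC0 : 0 ≤ C := by
    have := hC 0 le_rfl
    have h2 := (hζ.1 0 le_rfl)
    simp at this
    linarith
  calc ζ (l1norm z) ≤ C * ((1 + (l1norm z : ℝ)) ^ (2 * k))⁻¹ := hC _ (by positivity)
    _ ≤ C * (∏ j, ((1 + |(z j : ℝ)|) ^ (2:ℕ)))⁻¹ := by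
        apply mul_le_mul_of_nonneg_left _ hC0
        apply inv_anti₀ (Finset.prod_pos fun j _ => by positivity) key
    _ = C * ∏ j, ((1 + |(z j : ℝ)|) ^ (2:ℕ))⁻¹ := by rw [Finset.prod_inv_distrib]

def zrep {M : ℕ} (c : ZMod M) : ℤ := if 2 * c.val ≤ M then (c.val : ℤ) else (c.val : ℤ) - M

lemma zrep_natAbs {M : ℕ} [NeZero M] (u v : ZMod M) :
    (zrep (v - u)).natAbs = torusD M u v := by
  have hv : (v - u).val < M := ZMod.val_lt _
  unfold zrep torusD
  split_ifs <;> omega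

lemma zrep_inj {M : ℕ} [NeZero M] : Function.Injective (zrep (M := M)) := by
  have h : ∀ c : ZMod M, ((zrep c : ℤ) : ZMod M) = c := by
    intro c
    unfold zrep
    split_ifs <;> push_cast <;> simp [ZMod.natCast_val, ZMod.natCast_self]
  intro c₁ c₂ hc
  rw [← h c₁, ← h c₂, hc]

lemma torusD_self {M : ℕ} [NeZero M] (u : ZMod M) : torusD M u u = 0 := by
  unfold torusD
  simp

/-- Lemma C.2. If the interaction `Φ` with values in a normed vector space
`𝒜` satisfies `∑_{Z ⊇ {x,y}} ‖Φ(Z)‖ ≤ K·F_ζ(d^Λ_L(x,y))` for all `x, y ∈ Λ(M)`, then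
`‖∑_Z Φ(Z)‖ ≤ C_ζ·K·M^{d−|ℓ|}` with `C_ζ = ‖F‖_Γ·∑_{z∈ℤ^{|ℓ|}} ζ(‖z‖₁) < ∞`. -/
theorem statement11 (d : ℕ) (hd : 1 ≤ d) (ζ : ℝ → ℝ) (hζ : InS ζ)
    (M : ℕ) [NeZero M] (hM : Even M) (hM2 : 2 ≤ M)
    (ℓ : Fin d → Bool) (l : Fin d → ZMod M)
    (𝒜 : Type*) [NormedAddCommGroup 𝒜] [NormedSpace ℝ 𝒜]
    (Φ : Finset (Fin d → ZMod M) → 𝒜) (hΦ0 : Φ ∅ = 0)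
    (K : ℝ) (hK : 0 ≤ K)
    (hΦ : ∀ x y : Fin d → ZMod M,
      ∑ Z ∈ Finset.univ.filter (fun Z : Finset (Fin d → ZMod M) => x ∈ Z ∧ y ∈ Z), ‖Φ Z‖ ≤
        K * Fzeta d ζ (dTorusL ℓ l x y)) :
    Summable (fun z : Fin ((Finset.univ.filter fun j => ℓ j = true).card) → ℤ =>
      ζ (l1norm z)) ∧
    ‖∑ Z : Finset (Fin d → ZMod M), Φ Z‖ ≤
      (FnormGamma d *
        ∑' z : Fin ((Finset.univ.filter fun j => ℓ j = true).card) → ℤ, ζ (l1norm z)) *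
        K * (M : ℝ) ^ (d - (Finset.univ.filter fun j => ℓ j = true).card) := by
  classical
  set k := (Finset.univ.filter fun j => ℓ j = true).card with hk
  have hsummζ : Summable (fun z : Fin k → ℤ => ζ (l1norm z)) := summable_zeta hζ k
  refine ⟨hsummζ, ?_⟩
  have hζpos : ∀ n : ℕ, 0 < ζ n := fun n => hζ.1 n (by positivity)
  have hFfun_pos : ∀ n : ℕ, 0 < Ffun d n := fun n => by unfold Ffun; positivity
  have hFfun_le_one : ∀ n : ℕ, Ffun d n ≤ 1 := by
    intro n
    unfold Ffun
    apply inv_le_one_of_one_le₀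
    apply one_le_pow₀
    have : (0:ℝ) ≤ n := by positivity
    linarith
  set D : (Fin d → ZMod M) → ℕ := distLoc ℓ l with hDdef
  set g : (Fin d → ZMod M) → ℝ := fun x => ζ (D x) * Ffun d (D x) with hgdef
  have stepA : ‖∑ Z : Finset (Fin d → ZMod M), Φ Z‖ ≤ K * ∑ x : (Fin d → ZMod M), g x := by
    calc ‖∑ Z : Finset (Fin d → ZMod M), Φ Z‖ ≤ ∑ Z : Finset (Fin d → ZMod M), ‖Φ Z‖ := norm_sum_le _ _
      _ ≤ ∑ Z : Finset (Fin d → ZMod M), (Z.card : ℝ) * ‖Φ Z‖ := by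
          apply Finset.sum_le_sum; intro Z _
          rcases Finset.eq_empty_or_nonempty Z with h | h
          · subst h; simp [hΦ0]
          · have h1 : 1 ≤ Z.card := Finset.Nonempty.card_pos h
            have h2 : (1:ℝ) ≤ (Z.card : ℝ) := by exact_mod_cast h1
            nlinarith [norm_nonneg (Φ Z)]
      _ = ∑ Z : Finset (Fin d → ZMod M), ∑ x : (Fin d → ZMod M), (if x ∈ Z then ‖Φ Z‖ else 0) := by
          apply Finset.sum_congr rfl; intro Z _
          rw [Finset.sum_ite_mem]
          simp [Finset.sum_const, nsmul_eq_mul]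
      _ = ∑ x : (Fin d → ZMod M), ∑ Z : Finset (Fin d → ZMod M), (if x ∈ Z then ‖Φ Z‖ else 0) := Finset.sum_comm
      _ ≤ ∑ x : (Fin d → ZMod M), K * g x := by
          apply Finset.sum_le_sum; intro x _
          have h1 : ∑ Z : Finset (Fin d → ZMod M), (if x ∈ Z then ‖Φ Z‖ else 0)
              = ∑ Z ∈ Finset.univ.filter (fun Z : Finset (Fin d → ZMod M) => x ∈ Z ∧ x ∈ Z), ‖Φ Z‖ := by
            rw [Finset.sum_filter]; simp
          rw [h1]
          refine le_trans (hΦ x x) ?_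
          apply mul_le_mul_of_nonneg_left _ hK
          have hxx : dTorusL ℓ l x x = D x + D x := by
            unfold dTorusL dTorus
            simp [torusD_self, hDdef]
          rw [hxx]
          have hD0 : (0:ℝ) ≤ (D x : ℝ) := by positivity
          have hm1 : ζ ((D x : ℕ) + (D x : ℕ) : ℕ) ≤ ζ (D x) := by
            push_cast
            exact hζ.2.2.1 _ _ hD0 (by linarith)
          have hm2 : ((1 + (((D x) + (D x) : ℕ) : ℝ)) ^ (d+1))⁻¹ ≤ ((1 + (D x : ℝ)) ^ (d+1))⁻¹ := by
            apply inv_anti₀ (by positivity)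
            apply pow_le_pow_left₀ (by positivity)
            push_cast
            linarith
          unfold Fzeta
          rw [hgdef]
          unfold Ffun
          exact mul_le_mul hm1 hm2 (by positivity) (hζpos _).le
      _ = K * ∑ x : (Fin d → ZMod M), g x := by rw [Finset.mul_sum]
  -- factorization
  have hcard_sub : Fintype.card {j : Fin d // ℓ j = true} = k := Fintype.card_subtype _
  have hcard_compl : Fintype.card {j : Fin d // ¬ (ℓ j = true)} = d - k := by
    rw [Fintype.card_subtype_compl, Fintype.card_fin, hcard_sub]
  set Dsub : (∀ _j : {j : Fin d // ℓ j = true}, ZMod M) → ℕ :=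
    fun a => ∑ j, torusD M (a j) (l j) with hDsub
  set E := Equiv.piEquivPiSubtypeProd (fun j : Fin d => ℓ j = true) (fun _ => ZMod M) with hE
  have hD_filter : ∀ x : (Fin d → ZMod M), D x = ∑ j : {j : Fin d // ℓ j = true}, torusD M (x j) (l j) := by
    intro x
    rw [hDdef]
    unfold distLoc
    rw [← Finset.sum_filter]
    exact Finset.sum_subtype _ (fun j => by simp) _
  have hD_symm : ∀ ab, D (E.symm ab) = Dsub ab.1 := by
    rintro ⟨a, b⟩
    rw [hD_filter, hDsub]
    apply Finset.sum_congr rfl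
    intro j _
    congr 1
    simp [hE, Equiv.piEquivPiSubtypeProd_symm_apply, dif_pos j.prop]
  have hcardb : Fintype.card (∀ _j : {j : Fin d // ¬ (ℓ j = true)}, ZMod M) = M ^ (d - k) := by
    rw [Fintype.card_pi, Finset.prod_const, Finset.card_univ, hcard_compl, ZMod.card]
  have hsplit : ∑ x : (Fin d → ZMod M), g x = (M:ℝ) ^ (d - k) * ∑ a, ζ (Dsub a) * Ffun d (Dsub a) := by
    rw [← Equiv.sum_comp E.symm g, Fintype.sum_prod_type]
    have h1 : ∀ a b, g (E.symm (a, b)) = ζ (Dsub a) * Ffun d (Dsub a) := by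
      intro a b
      rw [hgdef]
      simp only []
      rw [hD_symm (a, b)]
    simp_rw [h1]
    calc ∑ a : {j : Fin d // ℓ j = true} → ZMod M, ∑ _b : {j : Fin d // ¬ (ℓ j = true)} → ZMod M,
          ζ (Dsub a) * Ffun d (Dsub a)
        = ∑ a : {j : Fin d // ℓ j = true} → ZMod M, (M:ℝ) ^ (d - k) * (ζ (Dsub a) * Ffun d (Dsub a)) := by
          apply Finset.sum_congr rfl; intro a _
          rw [Finset.sum_const, Finset.card_univ, hcardb, nsmul_eq_mul]
          push_cast; ring
      _ = (M:ℝ) ^ (d - k) * ∑ a, ζ (Dsub a) * Ffun d (Dsub a) := by rw [← Finset.mul_sum]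
  -- injection into ℤ^k
  have e : {j : Fin d // ℓ j = true} ≃ Fin k := Fintype.equivFinOfCardEq hcard_sub
  set ι : ({j : Fin d // ℓ j = true} → ZMod M) → (Fin k → ℤ) :=
    fun a i => zrep (l (e.symm i) - a (e.symm i)) with hι
  have hι_inj : Function.Injective ι := by
    intro a a' h
    funext j
    have h2 := congrFun h (e j)
    simp only [hι, Equiv.symm_apply_apply] at h2
    have h3 := zrep_inj h2
    have := sub_right_injective h3
    exact this
  have hι_norm : ∀ a, l1norm (ι a) = Dsub a := by
    intro a
    show ∑ i, ((ι a) i).natAbs = ∑ j : {j : Fin d // ℓ j = true}, torusD M (a j) (l j)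
    calc ∑ i, ((ι a) i).natAbs
        = ∑ i, torusD M (a (e.symm i)) (l (e.symm i)) :=
          Finset.sum_congr rfl (fun i _ => zrep_natAbs _ _)
      _ = ∑ j : {j : Fin d // ℓ j = true}, torusD M (a j) (l j) :=
          Equiv.sum_comp e.symm (fun j => torusD M (a j) (l j))
  have hh_nonneg : ∀ z : Fin k → ℤ, 0 ≤ ζ (l1norm z) * Ffun d (l1norm z) :=
    fun z => mul_nonneg (hζpos _).le (hFfun_pos _).le
  have hsummh : Summable (fun z : Fin k → ℤ => ζ (l1norm z) * Ffun d (l1norm z)) :=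
    hsummζ.of_nonneg_of_le hh_nonneg
      (fun z => mul_le_of_le_one_right (hζpos _).le (hFfun_le_one _))
  have hstepC : ∑ a, ζ (Dsub a) * Ffun d (Dsub a) ≤
      ∑' z : Fin k → ℤ, ζ (l1norm z) * Ffun d (l1norm z) := by
    calc ∑ a, ζ (Dsub a) * Ffun d (Dsub a)
        = ∑ a, ζ (l1norm (ι a)) * Ffun d (l1norm (ι a)) := by
          apply Finset.sum_congr rfl; intro a _; rw [hι_norm]
      _ = ∑ z ∈ Finset.univ.image ι, ζ (l1norm z) * Ffun d (l1norm z) := by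
          rw [Finset.sum_image (f := fun z : Fin k → ℤ => ζ (l1norm z) * Ffun d (l1norm z))
            (g := ι) (fun x _ y _ h => hι_inj h)]
      _ ≤ ∑' z : Fin k → ℤ, ζ (l1norm z) * Ffun d (l1norm z) :=
          hsummh.sum_le_tsum _ (fun z _ => hh_nonneg z)
  have hF1 : (1:ℝ) ≤ FnormGamma d := by
    have hs := summable_Ffun d hd
    have h0 := hs.le_tsum 0 (fun y _ => (hFfun_pos (l1norm y)).le)
    have h1 : Ffun d (l1norm (0 : Fin d → ℤ)) = 1 := by
      unfold Ffun l1norm; simp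
    rw [h1] at h0
    exact h0
  have hstepD : ∑' z : Fin k → ℤ, ζ (l1norm z) * Ffun d (l1norm z) ≤
      FnormGamma d * ∑' z : Fin k → ℤ, ζ (l1norm z) := by
    rw [← tsum_mul_left]
    apply hsummh.tsum_le_tsum _ (hsummζ.mul_left _)
    intro z
    calc ζ (l1norm z) * Ffun d (l1norm z) ≤ ζ (l1norm z) * 1 :=
          mul_le_mul_of_nonneg_left (hFfun_le_one _) (hζpos _).le
      _ = ζ (l1norm z) := mul_one _
      _ ≤ FnormGamma d * ζ (l1norm z) := le_mul_of_one_le_left (hζpos _).le hF1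
  have htsum_nonneg : 0 ≤ ∑' z : Fin k → ℤ, ζ (l1norm z) :=
    tsum_nonneg (fun z => (hζpos _).le)
  calc ‖∑ Z : Finset (Fin d → ZMod M), Φ Z‖ ≤ K * ∑ x : (Fin d → ZMod M), g x := stepA
    _ = K * ((M:ℝ) ^ (d - k) * ∑ a, ζ (Dsub a) * Ffun d (Dsub a)) := by rw [hsplit]
    _ ≤ K * ((M:ℝ) ^ (d - k) * (FnormGamma d * ∑' z : Fin k → ℤ, ζ (l1norm z))) := by
        apply mul_le_mul_of_nonneg_left _ hK
        exact mul_le_mul_of_nonneg_left (le_trans hstepC hstepD) (by positivity)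
    _ = (FnormGamma d * ∑' z : Fin k → ℤ, ζ (l1norm z)) * K * (M:ℝ) ^ (d - k) := by ring
end

section
/- Let ℋ be a finite-dimensional complex Hilbert space and H ∈ B(ℋ) self-adjoint with spectral decomposition H = ∑_n E_n P_n, where the E_n are the distinct eigenvalues of H and P_n are the orthogonal projections onto the corresponding eigenspaces. Let W : ℝ → ℂ be Lebesgue integrable. Then for every A ∈ B(ℋ): ∫_ℝ W(s)·e^{iHs}·A·e^{−iHs} ds = √(2π)·∑_{n,m} Ŵ(E_m − E_n)·P_n·A·P_m. -/
open scoped BigOperators ComplexConjugate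

noncomputable section

variable {ℋ : Type*} [NormedAddCommGroup ℋ] [InnerProductSpace ℂ ℋ] [FiniteDimensional ℂ ℋ]

/-- The orthogonal projection onto a subspace `K`, as an operator on `ℋ`. -/
noncomputable def orthProj (K : Submodule ℂ ℋ) : ℋ →L[ℂ] ℋ :=
  K.subtypeL.comp K.orthogonalProjectionOnto

/-- The spectral projection of `H` associated with a set `S ⊆ ℝ`: the orthogonal projection
onto the span of all eigenvectors of `H` with eigenvalue in `S`. -/
noncomputable def spectralProj (H : ℋ →L[ℂ] ℋ) (S : Set ℝ) : ℋ →L[ℂ] ℋ :=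
  orthProj (⨆ μ ∈ S, Module.End.eigenspace (H : ℋ →ₗ[ℂ] ℋ) (μ : ℂ))

/-- An operator `A` is off-diagonal with respect to a projection `P` if `PAP = 0` and
`(1−P)A(1−P) = 0`. -/
def IsOffDiagonal (P A : ℋ →L[ℂ] ℋ) : Prop :=
  P * A * P = 0 ∧ (1 - P) * A * (1 - P) = 0

/-- The Fourier transform `Ŵ(ω) = (2π)^{-1/2} ∫ W(s) e^{−iωs} ds`. -/
noncomputable def fhat (W : ℝ → ℂ) (ω : ℝ) : ℂ :=
  (Real.sqrt (2 * Real.pi) : ℂ)⁻¹ * ∫ s : ℝ, Complex.exp (-(Complex.I * ω * s)) * W s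

/-- The Heisenberg conjugation `e^{iHs} A e^{−iHs}`. -/
noncomputable def heisConj (H : ℋ →L[ℂ] ℋ) (s : ℝ) (A : ℋ →L[ℂ] ℋ) : ℋ →L[ℂ] ℋ :=
  NormedSpace.exp ((s : ℂ) • (Complex.I • H)) * A *
    NormedSpace.exp ((-s : ℂ) • (Complex.I • H))

lemma aux_exp_smul_idem (Q : ℋ →L[ℂ] ℋ) (hQ : Q * Q = Q) (a : ℂ) :
    NormedSpace.exp (a • Q) = 1 + (Complex.exp a - 1) • Q := by
  have hQpow : ∀ m : ℕ, Q ^ (m + 1) = Q := by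
    intro m
    induction m with
    | zero => simp
    | succ k ih => rw [pow_succ, ih, hQ]
  have hfe : ∀ k : ℕ, ((Nat.factorial k : ℂ))⁻¹ • (a • Q) ^ k =
      (((Nat.factorial k : ℂ))⁻¹ * a ^ k) • Q + (if k = 0 then 1 - Q else 0) := by
    intro k
    cases k with
    | zero => simp
    | succ m =>
      rw [smul_pow, hQpow, if_neg (Nat.succ_ne_zero m)]
      rw [smul_smul, add_zero]
  have h1 : Summable fun k : ℕ => (((Nat.factorial k : ℂ))⁻¹ * a ^ k) • Q := by
    have := NormedSpace.expSeries_summable' (𝕂 := ℂ) a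
    simpa [smul_eq_mul] using this.smul_const Q
  have h2 : Summable fun k : ℕ => (if k = 0 then (1 - Q : ℋ →L[ℂ] ℋ) else 0) := by
    apply summable_of_ne_finset_zero (s := {0})
    intro k hk
    simp only [Finset.mem_singleton] at hk
    simp [hk]
  have hsum : Summable fun k : ℕ => (((Nat.factorial k : ℂ))⁻¹ * a ^ k) := by
    simpa [smul_eq_mul] using NormedSpace.expSeries_summable' (𝕂 := ℂ) a
  rw [NormedSpace.exp_eq_tsum ℂ]
  calc ∑' k : ℕ, ((Nat.factorial k : ℂ))⁻¹ • (a • Q) ^ k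
      = ∑' k : ℕ, ((((Nat.factorial k : ℂ))⁻¹ * a ^ k) • Q + (if k = 0 then 1 - Q else 0)) := by
        exact tsum_congr hfe
    _ = (∑' k : ℕ, (((Nat.factorial k : ℂ))⁻¹ * a ^ k)) • Q + (1 - Q) := by
        rw [Summable.tsum_add h1 h2, Summable.tsum_smul_const hsum,
          tsum_eq_single (f := fun k : ℕ => if k = 0 then (1 - Q : ℋ →L[ℂ] ℋ) else 0) 0
            (by intro b hb; simp [hb])]
        simp
    _ = 1 + (Complex.exp a - 1) • Q := by
        have : (∑' k : ℕ, (((Nat.factorial k : ℂ))⁻¹ * a ^ k)) = Complex.exp a := by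
          rw [Complex.exp_eq_exp_ℂ, NormedSpace.exp_eq_tsum ℂ]
          simp [smul_eq_mul]
        rw [this, sub_smul, one_smul]
        abel

lemma aux_orthProj_mem (K : Submodule ℂ ℋ) {x : ℋ} (hx : x ∈ K) : orthProj K x = x := by
  have := congrArg Subtype.val (Submodule.orthogonalProjectionOnto_mem_subspace_eq_self (⟨x, hx⟩ : K))
  simpa [orthProj] using this

lemma aux_orthProj_mem_orthogonal (K : Submodule ℂ ℋ) {x : ℋ} (hx : x ∈ Kᗮ) :
    orthProj K x = 0 := by
  have := congrArg Subtype.val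
    (Submodule.orthogonalProjectionOnto_apply_of_mem_orthogonal (K := K) hx)
  simpa [orthProj] using this

lemma aux_orthProj_idem (K : Submodule ℂ ℋ) : orthProj K * orthProj K = orthProj K := by
  ext x
  exact aux_orthProj_mem K (by simp [orthProj])


/-- key computation in Lemma D.1. For self-adjoint `H` with spectral
decomposition `H = ∑ₙ Eₙ Pₙ` (distinct eigenvalues `Eₙ`, eigenprojections `Pₙ`) and `W`
integrable: `∫ W(s) e^{iHs} A e^{−iHs} ds = √(2π) ∑_{n,m} Ŵ(E_m − E_n) Pₙ A P_m`. -/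
theorem statement14 (H : ℋ →L[ℂ] ℋ) (hH : IsSelfAdjoint H)
    (n : ℕ) (E : Fin n → ℝ) (hE_inj : Function.Injective E)
    (hE_eig : ∀ i, Module.End.HasEigenvalue (H : ℋ →ₗ[ℂ] ℋ) (E i : ℂ))
    (hE_all : ∀ μ : ℂ, Module.End.HasEigenvalue (H : ℋ →ₗ[ℂ] ℋ) μ → ∃ i, (E i : ℂ) = μ)
    (P : Fin n → (ℋ →L[ℂ] ℋ))
    (hP : ∀ i, P i = orthProj (Module.End.eigenspace (H : ℋ →ₗ[ℂ] ℋ) (E i : ℂ)))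
    (hdecomp : H = ∑ i, (E i : ℂ) • P i)
    (W : ℝ → ℂ) (hW : MeasureTheory.Integrable W)
    (A : ℋ →L[ℂ] ℋ) :
    ∫ s : ℝ, W s • heisConj H s A =
      (Real.sqrt (2 * Real.pi) : ℂ) • ∑ i, ∑ j, fhat W (E j - E i) • (P i * A * P j) := by
  classical
  have hsym : (H : ℋ →ₗ[ℂ] ℋ).IsSymmetric := hH.isSymmetric
  set K : Fin n → Submodule ℂ ℋ :=
    fun i => Module.End.eigenspace (H : ℋ →ₗ[ℂ] ℋ) (E i : ℂ) with hK
  -- orthogonality of the eigenspaces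
  have hKorth : ∀ {i j : Fin n}, i ≠ j → K j ≤ (K i)ᗮ := by
    intro i j hij x hx
    rw [Submodule.mem_orthogonal]
    intro y hy
    have hEne : (E i : ℂ) ≠ (E j : ℂ) := by
      intro h
      exact hij (hE_inj (by exact_mod_cast h))
    exact hsym.orthogonalFamily_eigenspaces hEne ⟨y, hy⟩ ⟨x, hx⟩
  have hPmem : ∀ (i : Fin n) (x : ℋ), P i x ∈ K i := by
    intro i x
    rw [hP i]
    simp [orthProj, hK]
  have hPP : ∀ i j, P i * P j = if i = j then P i else 0 := by
    intro i j
    by_cases h : i = j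
    · subst h
      rw [if_pos rfl, hP i]
      exact aux_orthProj_idem _
    · rw [if_neg h]
      ext x
      simp only [ContinuousLinearMap.mul_apply, ContinuousLinearMap.zero_apply]
      rw [hP i]
      exact aux_orthProj_mem_orthogonal (K i) (hKorth h (hPmem j x))
  -- the projections sum to 1
  have hsupK : (⨆ i, K i) = ⊤ := by
    have hsup : (⨆ μ : ℂ, Module.End.eigenspace (H : ℋ →ₗ[ℂ] ℋ) μ) = ⊤ :=
      Submodule.orthogonal_eq_bot_iff.mp hsym.orthogonalComplement_iSup_eigenspaces_eq_bot
    refine le_antisymm le_top ?_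
    rw [← hsup]
    apply iSup_le
    intro μ
    by_cases hμ : Module.End.HasEigenvalue (H : ℋ →ₗ[ℂ] ℋ) μ
    · obtain ⟨i, hi⟩ := hE_all μ hμ
      rw [← hi]
      exact le_iSup K i
    · have : Module.End.eigenspace (H : ℋ →ₗ[ℂ] ℋ) μ = ⊥ := not_not.mp hμ
      rw [this]
      exact bot_le
  have happly : ∀ (j : Fin n) (y : ℋ), y ∈ K j → (∑ i, P i) y = y := by
    intro j y hy
    rw [ContinuousLinearMap.sum_apply]
    rw [Finset.sum_eq_single j]
    · rw [hP j]; exact aux_orthProj_mem (K j) hy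
    · intro i _ hij
      rw [hP i]
      exact aux_orthProj_mem_orthogonal (K i) (hKorth hij hy)
    · intro h; exact absurd (Finset.mem_univ j) h
  have hsum1 : (∑ i, P i) = (1 : ℋ →L[ℂ] ℋ) := by
    ext x
    have htop : ⊤ ≤ LinearMap.eqLocus ((∑ i, P i : ℋ →L[ℂ] ℋ) : ℋ →ₗ[ℂ] ℋ) ((1 : ℋ →L[ℂ] ℋ) : ℋ →ₗ[ℂ] ℋ) := by
      rw [← hsupK]
      apply iSup_le
      intro j y hy
      rw [LinearMap.mem_eqLocus]
      exact happly j y hy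
    exact htop (Submodule.mem_top) |>.trans rfl
  -- exponential of c • H
  have hexp : ∀ c : ℂ, NormedSpace.exp (c • H) = ∑ i, Complex.exp (c * E i) • P i := by
    intro c
    have hcH : c • H = ∑ i, (c * (E i : ℂ)) • P i := by
      rw [hdecomp, Finset.smul_sum]
      refine Finset.sum_congr rfl fun i _ => ?_
      rw [smul_smul]
    have key : ∀ t : Finset (Fin n),
        NormedSpace.exp (∑ i ∈ t, (c * (E i : ℂ)) • P i)
          = 1 + ∑ i ∈ t, (Complex.exp (c * E i) - 1) • P i := by
      intro t
      induction t using Finset.induction_on with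
      | empty => simp
      | @insert a t ha ih =>
        have hcomm : Commute ((c * (E a : ℂ)) • P a) (∑ i ∈ t, (c * (E i : ℂ)) • P i) := by
          apply Commute.sum_right
          intro i hi
          have hia : a ≠ i := by rintro rfl; exact ha hi
          apply Commute.smul_left
          apply Commute.smul_right
          show P a * P i = P i * P a
          rw [hPP a i, hPP i a, if_neg hia, if_neg (Ne.symm hia)]
        have hidem : P a * P a = P a := by simpa using hPP a a
        have hz : P a * (∑ i ∈ t, (Complex.exp (c * E i) - 1) • P i) = 0 := by
          rw [Finset.mul_sum]
          refine Finset.sum_eq_zero fun i hi => ?_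
          rw [mul_smul_comm, hPP a i, if_neg (by rintro rfl; exact ha hi), smul_zero]
        letI : NormedAlgebra ℚ (ℋ →L[ℂ] ℋ) := NormedAlgebra.restrictScalars ℚ ℂ (ℋ →L[ℂ] ℋ)
        rw [Finset.sum_insert ha, NormedSpace.exp_add_of_commute hcomm, ih,
          aux_exp_smul_idem (P a) hidem (c * E a), Finset.sum_insert ha]
        rw [mul_add, add_mul, add_mul, one_mul, mul_one, smul_mul_assoc, hz, smul_zero]
        abel
    rw [hcH, key Finset.univ, ← hsum1, ← Finset.sum_add_distrib]
    refine Finset.sum_congr rfl fun i _ => ?_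
    rw [sub_smul, one_smul]
    abel
  -- expansion of the Heisenberg conjugation
  have hheis0 : ∀ s : ℝ, heisConj H s A =
      ∑ i, ∑ j, Complex.exp (Complex.I * ((E i - E j : ℝ) : ℂ) * s) • (P i * A * P j) := by
    intro s
    have h1 : (s : ℂ) • (Complex.I • H) = ((s : ℂ) * Complex.I) • H := smul_smul _ _ _
    have h2 : (-s : ℂ) • (Complex.I • H) = ((-s : ℂ) * Complex.I) • H := smul_smul _ _ _
    rw [heisConj, h1, h2, hexp, hexp, Finset.sum_mul, Finset.sum_mul]
    refine Finset.sum_congr rfl fun i _ => ?_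
    rw [Finset.mul_sum]
    refine Finset.sum_congr rfl fun j _ => ?_
    simp only [smul_mul_assoc, mul_smul_comm, smul_smul]
    rw [← Complex.exp_add]
    congr 2
    push_cast
    ring
  have hheis : ∀ s : ℝ, W s • heisConj H s A =
      ∑ i, ∑ j, (W s * Complex.exp (Complex.I * ((E i - E j : ℝ) : ℂ) * s)) •
        (P i * A * P j) := by
    intro s
    rw [hheis0 s, Finset.smul_sum]
    refine Finset.sum_congr rfl fun i _ => ?_
    rw [Finset.smul_sum]
    refine Finset.sum_congr rfl fun j _ => ?_
    rw [smul_smul]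
  -- integrability of each coefficient
  have hInt : ∀ θ : ℝ, MeasureTheory.Integrable
      (fun s : ℝ => W s * Complex.exp (Complex.I * (θ : ℂ) * (s : ℂ))) := by
    intro θ
    have hbound : ∀ s : ℝ, ‖Complex.exp (Complex.I * (θ : ℂ) * (s : ℂ))‖ ≤ 1 := by
      intro s
      have hre : (Complex.I * (θ : ℂ) * (s : ℂ)).re = 0 := by
        simp [Complex.mul_re, Complex.mul_im]
      rw [Complex.norm_exp, hre, Real.exp_zero]
    have h := hW.bdd_mul (c := 1) (Continuous.aestronglyMeasurable (by fun_prop)) (Filter.Eventually.of_forall hbound)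
    simpa [mul_comm] using h
  have hsqrt_ne : ((Real.sqrt (2 * Real.pi) : ℝ) : ℂ) ≠ 0 :=
    Complex.ofReal_ne_zero.mpr (Real.sqrt_ne_zero'.mpr (by positivity))
  calc ∫ s : ℝ, W s • heisConj H s A
      = ∫ s : ℝ, ∑ i, ∑ j, (W s * Complex.exp (Complex.I * ((E i - E j : ℝ) : ℂ) * s)) •
          (P i * A * P j) := by
        simp only [hheis]
    _ = ∑ i, ∑ j, (∫ s : ℝ, W s * Complex.exp (Complex.I * ((E i - E j : ℝ) : ℂ) * s)) •
          (P i * A * P j) := by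
        rw [MeasureTheory.integral_finset_sum _ (fun i _ =>
          MeasureTheory.integrable_finset_sum _ (fun j _ => (hInt _).smul_const _))]
        refine Finset.sum_congr rfl fun i _ => ?_
        rw [MeasureTheory.integral_finset_sum _ (fun j _ => (hInt _).smul_const _)]
        refine Finset.sum_congr rfl fun j _ => ?_
        exact integral_smul_const _ _
    _ = (Real.sqrt (2 * Real.pi) : ℂ) • ∑ i, ∑ j, fhat W (E j - E i) • (P i * A * P j) := by
        rw [Finset.smul_sum]
        refine Finset.sum_congr rfl fun i _ => ?_
        rw [Finset.smul_sum]
        refine Finset.sum_congr rfl fun j _ => ?_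
        rw [smul_smul]
        congr 1
        rw [fhat, ← mul_assoc, mul_inv_cancel₀ hsqrt_ne, one_mul]
        refine MeasureTheory.integral_congr_ae (Filter.Eventually.of_forall fun s => ?_)
        rw [mul_comm]
        congr 2
        push_cast
        ring
end
end

section
/- Let ℋ be a finite-dimensional complex Hilbert space, H ∈ B(ℋ) self-adjoint, σ_*(H) ⊆ σ(H) a subset of the eigenvalues with diam(σ_*(H)) ≤ δ̃ for some δ̃ ≥ 0, and let P_* be the spectral projection of H associated with σ_*(H). Let W : ℝ → ℂ be Lebesgue integrable with Ŵ(ω) = 0 for all ω ∈ [−δ̃, δ̃]. Then P_*·(∫_ℝ W(s)·e^{iHs}·A·e^{−iHs} ds)·P_* = 0 for every A ∈ B(ℋ). (Lemma D.1, second part.) -/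
open scoped BigOperators ComplexConjugate

noncomputable section

variable {ℋ : Type*} [NormedAddCommGroup ℋ] [InnerProductSpace ℂ ℋ] [FiniteDimensional ℂ ℋ]

/-- The set of (real) eigenvalues of `H`. -/
def realEigenvalues (H : ℋ →L[ℂ] ℋ) : Set ℝ :=
  {μ : ℝ | Module.End.HasEigenvalue (H : ℋ →ₗ[ℂ] ℋ) (μ : ℂ)}

open scoped InnerProductSpace

instance instNormedAlgebraRatCLM : NormedAlgebra ℚ (ℋ →L[ℂ] ℋ) :=
  NormedAlgebra.restrictScalars ℚ ℂ _

lemma exp_apply_eigvec (L : ℋ →L[ℂ] ℋ) {c : ℂ} {z : ℋ} (h : L z = c • z) :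
    NormedSpace.exp L z = Complex.exp c • z := by
  have hpow : ∀ n : ℕ, (L ^ n) z = c ^ n • z := by
    intro n
    induction n with
    | zero => simp
    | succ n ih =>
      rw [pow_succ, pow_succ, ContinuousLinearMap.mul_apply, h, map_smul, ih, smul_smul,
        mul_comm]
  have hs : Summable fun n : ℕ => ((Nat.factorial n : ℂ))⁻¹ • L ^ n := NormedSpace.expSeries_summable' L
  have hs2 : Summable fun n : ℕ => ((Nat.factorial n : ℂ))⁻¹ • c ^ n := NormedSpace.expSeries_summable' c
  rw [NormedSpace.exp_eq_tsum ℂ]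
  have := (ContinuousLinearMap.apply ℂ ℋ z).map_tsum hs
  simp only [ContinuousLinearMap.apply_apply] at this
  rw [this]
  simp only [ContinuousLinearMap.smul_apply, hpow, smul_smul]
  rw [show (Complex.exp c • z) = (∑' n : ℕ, ((Nat.factorial n : ℂ))⁻¹ • c ^ n) • z by
    congr 1
    rw [Complex.exp_eq_exp_ℂ, NormedSpace.exp_eq_tsum ℂ]]
  rw [← hs2.tsum_smul_const]
  simp [smul_smul]

lemma star_exp_smul (H : ℋ →L[ℂ] ℋ) (hH : IsSelfAdjoint H) (c : ℂ) (hc : conj c = c) :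
    star (NormedSpace.exp (c • (Complex.I • H))) =
      NormedSpace.exp ((-c) • (Complex.I • H)) := by
  rw [NormedSpace.star_exp]
  congr 1
  rw [star_smul, star_smul, hH.star_eq]
  simp only [RCLike.star_def, hc, Complex.conj_I, smul_smul]
  ring_nf

lemma exp_smul_mul_neg (H : ℋ →L[ℂ] ℋ) (c : ℂ) :
    NormedSpace.exp ((-c) • (Complex.I • H)) * NormedSpace.exp (c • (Complex.I • H)) = 1 := by
  rw [← NormedSpace.exp_add_of_commute (((Commute.refl _).smul_left _).smul_right _)]
  rw [← add_smul, neg_add_cancel, zero_smul, NormedSpace.exp_zero]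

lemma norm_exp_smul_le (H : ℋ →L[ℂ] ℋ) (hH : IsSelfAdjoint H) (c : ℂ) (hc : conj c = c) :
    ‖NormedSpace.exp (c • (Complex.I • H))‖ ≤ 1 := by
  refine ContinuousLinearMap.opNorm_le_bound _ zero_le_one fun z => ?_
  rw [one_mul]
  set U := NormedSpace.exp (c • (Complex.I • H)) with hU
  have h1 : ⟪U z, U z⟫_ℂ = ⟪z, z⟫_ℂ := by
    rw [← ContinuousLinearMap.adjoint_inner_left, ← ContinuousLinearMap.star_eq_adjoint,
      star_exp_smul H hH c hc, ← ContinuousLinearMap.mul_apply, exp_smul_mul_neg,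
      ContinuousLinearMap.one_apply]
  have h2 : ‖U z‖ ^ 2 = ‖z‖ ^ 2 := by
    have := congrArg Complex.re h1
    rwa [← inner_self_eq_norm_sq (𝕜 := ℂ), ← inner_self_eq_norm_sq (𝕜 := ℂ)]
  nlinarith [norm_nonneg (U z), norm_nonneg z]

set_option maxHeartbeats 1000000 in
/-- Lemma D.1, second part. If `σ_*(H) ⊆ σ(H)` has diameter `≤ δ̃` and
`Ŵ` vanishes on `[−δ̃, δ̃]`, then `P_* (∫ W(s) e^{iHs} A e^{−iHs} ds) P_* = 0` for every `A`. -/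
theorem statement16 (H : ℋ →L[ℂ] ℋ) (hH : IsSelfAdjoint H)
    (σstar : Set ℝ) (hσ : σstar ⊆ realEigenvalues H)
    (δ : ℝ) (hδ : 0 ≤ δ)
    (hdiam : ∀ μ ∈ σstar, ∀ ν ∈ σstar, |μ - ν| ≤ δ)
    (W : ℝ → ℂ) (hWint : MeasureTheory.Integrable W)
    (hW : ∀ ω ∈ Set.Icc (-δ) δ, fhat W ω = 0)
    (A : ℋ →L[ℂ] ℋ) :
    spectralProj H σstar *
      (∫ s : ℝ, W s • (NormedSpace.exp ((s : ℂ) • (Complex.I • H)) * A *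
        NormedSpace.exp ((-s : ℂ) • (Complex.I • H)))) *
      spectralProj H σstar = 0 := by
  classical
  set F : ℝ → (ℋ →L[ℂ] ℋ) := fun s => W s • (NormedSpace.exp ((s : ℂ) • (Complex.I • H)) * A *
        NormedSpace.exp ((-s : ℂ) • (Complex.I • H))) with hF
  set T : ℋ →L[ℂ] ℋ := ∫ s : ℝ, F s with hT
  -- continuity and integrability
  have hcont : Continuous fun s : ℝ => NormedSpace.exp ((s : ℂ) • (Complex.I • H)) * A *
      NormedSpace.exp ((-s : ℂ) • (Complex.I • H)) := by
    have h1 : Continuous fun s : ℝ => NormedSpace.exp ((s : ℂ) • (Complex.I • H)) :=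
      NormedSpace.exp_continuous.comp (Complex.continuous_ofReal.smul continuous_const)
    have h2 : Continuous fun s : ℝ => NormedSpace.exp ((-s : ℂ) • (Complex.I • H)) :=
      NormedSpace.exp_continuous.comp
        ((Complex.continuous_ofReal.neg).smul continuous_const)
    exact (h1.mul continuous_const).mul h2
  have hint : MeasureTheory.Integrable F := by
    refine MeasureTheory.Integrable.mono' (hWint.norm.mul_const ‖A‖)
      (hWint.aestronglyMeasurable.smul hcont.aestronglyMeasurable) ?_
    filter_upwards with s
    show ‖W s • (NormedSpace.exp ((s : ℂ) • (Complex.I • H)) * A *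
        NormedSpace.exp ((-s : ℂ) • (Complex.I • H)))‖ ≤ ‖W s‖ * ‖A‖
    have b1 := norm_exp_smul_le H hH (s : ℂ) (Complex.conj_ofReal s)
    have b2 := norm_exp_smul_le H hH (-(s : ℂ)) (by simp [Complex.conj_ofReal])
    have m0 : ‖NormedSpace.exp ((s : ℂ) • (Complex.I • H)) * A‖ ≤
        ‖NormedSpace.exp ((s : ℂ) • (Complex.I • H))‖ * ‖A‖ :=
      norm_mul_le _ _
    have m0' : ‖NormedSpace.exp ((s : ℂ) • (Complex.I • H)) * A *
        NormedSpace.exp ((-s : ℂ) • (Complex.I • H))‖ ≤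
        ‖NormedSpace.exp ((s : ℂ) • (Complex.I • H)) * A‖ *
        ‖NormedSpace.exp ((-s : ℂ) • (Complex.I • H))‖ :=
      norm_mul_le _ _
    have m1 : ‖NormedSpace.exp ((s : ℂ) • (Complex.I • H)) * A *
        NormedSpace.exp ((-s : ℂ) • (Complex.I • H))‖ ≤ ‖A‖ := by
      nlinarith [norm_nonneg (NormedSpace.exp ((s : ℂ) • (Complex.I • H)) * A),
        norm_nonneg (NormedSpace.exp ((-s : ℂ) • (Complex.I • H))),
        norm_nonneg A, norm_nonneg (NormedSpace.exp ((s : ℂ) • (Complex.I • H)))]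
    exact (norm_smul_le _ _).trans (mul_le_mul_of_nonneg_left m1 (norm_nonneg (W s)))
  -- the key matrix-element computation
  have key : ∀ μ ∈ σstar, ∀ z ∈ Module.End.eigenspace (H : ℋ →ₗ[ℂ] ℋ) (μ : ℂ),
      ∀ ν ∈ σstar, ∀ x ∈ Module.End.eigenspace (H : ℋ →ₗ[ℂ] ℋ) (ν : ℂ),
      ⟪x, T z⟫_ℂ = 0 := by
    intro μ hμ z hz ν hν x hx
    have hz' : H z = (μ : ℂ) • z := by
      simpa using Module.End.mem_eigenspace_iff.mp hz
    have hx' : H x = (ν : ℂ) • x := by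
      simpa using Module.End.mem_eigenspace_iff.mp hx
    rw [hT, ContinuousLinearMap.integral_apply hint z,
      ← integral_inner (hint.apply_continuousLinearMap z) x]
    have hpt : ∀ s : ℝ, ⟪x, F s z⟫_ℂ
        = Complex.exp (-(Complex.I * ((μ - ν : ℝ) : ℂ) * (s : ℂ))) * W s * ⟪x, A z⟫_ℂ := by
      intro s
      have e1 : NormedSpace.exp ((-s : ℂ) • (Complex.I • H)) z
          = Complex.exp ((-s : ℂ) * (Complex.I * (μ : ℂ))) • z := by
        refine exp_apply_eigvec _ ?_
        rw [ContinuousLinearMap.smul_apply, ContinuousLinearMap.smul_apply, hz',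
          smul_smul, smul_smul, mul_assoc]
      have e2 : ∀ w : ℋ, ⟪x, NormedSpace.exp ((s : ℂ) • (Complex.I • H)) w⟫_ℂ
          = Complex.exp ((s : ℂ) * (Complex.I * (ν : ℂ))) * ⟪x, w⟫_ℂ := by
        intro w
        rw [← ContinuousLinearMap.adjoint_inner_left, ← ContinuousLinearMap.star_eq_adjoint,
          star_exp_smul H hH _ (Complex.conj_ofReal s)]
        have e3 : NormedSpace.exp ((-(s : ℂ)) • (Complex.I • H)) x
            = Complex.exp ((-(s : ℂ)) * (Complex.I * (ν : ℂ))) • x := by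
          refine exp_apply_eigvec _ ?_
          rw [ContinuousLinearMap.smul_apply, ContinuousLinearMap.smul_apply, hx',
            smul_smul, smul_smul, mul_assoc]
        rw [e3, inner_smul_left, ← Complex.exp_conj]
        congr 2
        simp [Complex.conj_ofReal]
      rw [hF]
      simp only [ContinuousLinearMap.smul_apply, ContinuousLinearMap.mul_apply, e1,
        map_smul, inner_smul_right, e2]
      rw [show -(Complex.I * ((μ - ν : ℝ) : ℂ) * (s : ℂ))
          = (-(s : ℂ)) * (Complex.I * (μ : ℂ)) + (s : ℂ) * (Complex.I * (ν : ℂ)) by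
        push_cast; ring, Complex.exp_add]
      ring
    simp only [hpt]
    rw [MeasureTheory.integral_mul_const]
    have habs : μ - ν ∈ Set.Icc (-δ) δ := by
      have := hdiam μ hμ ν hν
      constructor <;> [linarith [abs_le.mp this |>.1]; exact (abs_le.mp this).2]
    have hfh := hW _ habs
    unfold fhat at hfh
    have h2π : (0 : ℝ) < Real.sqrt (2 * Real.pi) := Real.sqrt_pos.mpr (by positivity)
    have hI0 : (∫ s : ℝ, Complex.exp (-(Complex.I * ((μ - ν : ℝ) : ℂ) * (s : ℂ))) * W s) = 0 := by
      rcases mul_eq_zero.mp hfh with h | h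
      · exact absurd h (inv_ne_zero (Complex.ofReal_ne_zero.mpr h2π.ne'))
      · exact h
    rw [hI0, zero_mul]
  -- conclude
  set K : Submodule ℂ ℋ := ⨆ μ ∈ σstar, Module.End.eigenspace (H : ℋ →ₗ[ℂ] ℋ) (μ : ℂ) with hK
  have hTz : ∀ μ ∈ σstar, ∀ z ∈ Module.End.eigenspace (H : ℋ →ₗ[ℂ] ℋ) (μ : ℂ),
      T z ∈ Kᗮ := by
    intro μ hμ z hz
    rw [Submodule.mem_orthogonal]
    intro x hxK
    have hle : K ≤ LinearMap.ker ((innerSL ℂ (T z) : ℋ →L[ℂ] ℂ) : ℋ →ₗ[ℂ] ℂ) := by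
      refine iSup₂_le fun ν hν => ?_
      intro x hx
      rw [LinearMap.mem_ker]
      show ⟪T z, x⟫_ℂ = 0
      rw [← inner_conj_symm, key μ hμ z hz ν hν x hx, map_zero]
    have := hle hxK
    rw [LinearMap.mem_ker] at this
    rw [← inner_conj_symm]
    rw [show ⟪T z, x⟫_ℂ = 0 from this, map_zero]
  ext v
  simp only [ContinuousLinearMap.mul_apply, ContinuousLinearMap.zero_apply]
  have hPv : spectralProj H σstar v ∈ K := by
    rw [hK]; exact Submodule.coe_mem _
  have hker : K ≤ LinearMap.ker (((spectralProj H σstar).comp T : ℋ →L[ℂ] ℋ) : ℋ →ₗ[ℂ] ℋ) := by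
    refine iSup₂_le fun μ hμ => ?_
    intro z hz
    rw [LinearMap.mem_ker]
    show spectralProj H σstar (T z) = 0
    unfold spectralProj orthProj
    rw [ContinuousLinearMap.comp_apply, Submodule.subtypeL_apply,
      Submodule.orthogonalProjectionOnto_apply_of_mem_orthogonal (hTz μ hμ z hz),
      Submodule.coe_zero]
  have := hker hPv
  rw [LinearMap.mem_ker] at this
  exact this
end
end
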